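/- Let Γ be a consistent extension of Δ⁰₁-comprehension that proves the existence of a universal Σ⁰₁ formula. Let P and Q be Π¹₂-problems and Λ(X,n,e) an arithmetic formula such that Player 2 wins any run of Ĝ^Γ(Q → P) that it plays according to Λ. Then there is an n such that Player 2 wins any run of G^Γ(Q → P) that it plays according to Λ in at most n many moves. -/

import Mathlib

/-!
A deep embedding of second-order arithmetic (with Henkin/two-sorted first-order semantics),
Π¹₂-problems, and the reduction games of Hirschfeldt–Jockusch type.

Provability `Proves Γ φ` is rendered as semantic consequence over all (Henkin) models;
by the Gödel completeness theorem for (two-sorted) first-order logic this coincides with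
derivability from `Γ`.
-/

namespace SOA

/-- An `L₁`-structure (a structure in the language of first-order arithmetic). -/
structure L1Struc where
  carrier : Type
  zero : carrier
  one : carrier
  add : carrier → carrier → carrier
  mul : carrier → carrier → carrier
  lt : carrier → carrier → Prop

/-- The standard natural numbers as an `L₁`-structure. -/
abbrev stdM : L1Struc where
  carrier := ℕ
  zero := 0
  one := 1
  add := (· + ·)
  mul := (· * ·)
  lt := (· < ·)

/-- Number terms of `L₁`/`L₂`, with named variables. -/
inductive Term : Type where
  | var : ℕ → Term
  | zero : Term
  | one : Term
  | add : Term → Term → Term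
  | mul : Term → Term → Term

def Term.val (M : L1Struc) (v : ℕ → M.carrier) : Term → M.carrier
  | .var i => v i
  | .zero => M.zero
  | .one => M.one
  | .add t s => M.add (t.val M v) (s.val M v)
  | .mul t s => M.mul (t.val M v) (s.val M v)

def Term.fv : Term → Set ℕ
  | .var i => {i}
  | .zero => ∅
  | .one => ∅
  | .add t s => t.fv ∪ s.fv
  | .mul t s => t.fv ∪ s.fv

/-- Formulas of `L₂`; number variables and set variables are indexed by `ℕ`. -/
inductive Formula : Type where
  | eq : Term → Term → Formula
  | lt : Term → Term → Formula
  | mem : Term → ℕ → Formula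
  | not : Formula → Formula
  | and : Formula → Formula → Formula
  | or : Formula → Formula → Formula
  | imp : Formula → Formula → Formula
  | allN : ℕ → Formula → Formula
  | exN : ℕ → Formula → Formula
  | allS : ℕ → Formula → Formula
  | exS : ℕ → Formula → Formula

def Formula.iff (φ ψ : Formula) : Formula := (φ.imp ψ).and (ψ.imp φ)

/-- Tarskian satisfaction; set quantifiers range over the second-order domain `D`. -/
def Formula.Sat (M : L1Struc) (D : Set (Set M.carrier)) :
    (ℕ → M.carrier) → (ℕ → Set M.carrier) → Formula → Prop
  | v, _, .eq t s => t.val M v = s.val M v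
  | v, _, .lt t s => M.lt (t.val M v) (s.val M v)
  | v, V, .mem t X => t.val M v ∈ V X
  | v, V, .not φ => ¬ Formula.Sat M D v V φ
  | v, V, .and φ ψ => Formula.Sat M D v V φ ∧ Formula.Sat M D v V ψ
  | v, V, .or φ ψ => Formula.Sat M D v V φ ∨ Formula.Sat M D v V ψ
  | v, V, .imp φ ψ => Formula.Sat M D v V φ → Formula.Sat M D v V ψ
  | v, V, .allN x φ => ∀ a : M.carrier, Formula.Sat M D (Function.update v x a) V φ
  | v, V, .exN x φ => ∃ a : M.carrier, Formula.Sat M D (Function.update v x a) V φ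
  | v, V, .allS X φ => ∀ A ∈ D, Formula.Sat M D v (Function.update V X A) φ
  | v, V, .exS X φ => ∃ A ∈ D, Formula.Sat M D v (Function.update V X A) φ

/-- Free number variables. -/
def Formula.numFV : Formula → Set ℕ
  | .eq t s => t.fv ∪ s.fv
  | .lt t s => t.fv ∪ s.fv
  | .mem t _ => t.fv
  | .not φ => φ.numFV
  | .and φ ψ => φ.numFV ∪ ψ.numFV
  | .or φ ψ => φ.numFV ∪ ψ.numFV
  | .imp φ ψ => φ.numFV ∪ ψ.numFV
  | .allN x φ => φ.numFV \ {x}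
  | .exN x φ => φ.numFV \ {x}
  | .allS _ φ => φ.numFV
  | .exS _ φ => φ.numFV

/-- Free set variables. -/
def Formula.setFV : Formula → Set ℕ
  | .eq _ _ => ∅
  | .lt _ _ => ∅
  | .mem _ X => {X}
  | .not φ => φ.setFV
  | .and φ ψ => φ.setFV ∪ ψ.setFV
  | .or φ ψ => φ.setFV ∪ ψ.setFV
  | .imp φ ψ => φ.setFV ∪ ψ.setFV
  | .allN _ φ => φ.setFV
  | .exN _ φ => φ.setFV
  | .allS X φ => φ.setFV \ {X}
  | .exS X φ => φ.setFV \ {X}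

/-- Arithmetic formulas: no set quantifiers (set variables may occur free). -/
def Formula.IsArithmetic : Formula → Prop
  | .eq _ _ => True
  | .lt _ _ => True
  | .mem _ _ => True
  | .not φ => φ.IsArithmetic
  | .and φ ψ => φ.IsArithmetic ∧ ψ.IsArithmetic
  | .or φ ψ => φ.IsArithmetic ∧ ψ.IsArithmetic
  | .imp φ ψ => φ.IsArithmetic ∧ ψ.IsArithmetic
  | .allN _ φ => φ.IsArithmetic
  | .exN _ φ => φ.IsArithmetic
  | .allS _ _ => False
  | .exS _ _ => False

/-- Δ⁰₀ (bounded) formulas. -/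
inductive IsDelta0 : Formula → Prop
  | eq (t s : Term) : IsDelta0 (.eq t s)
  | lt (t s : Term) : IsDelta0 (.lt t s)
  | mem (t : Term) (X : ℕ) : IsDelta0 (.mem t X)
  | not {φ} : IsDelta0 φ → IsDelta0 (.not φ)
  | and {φ ψ} : IsDelta0 φ → IsDelta0 ψ → IsDelta0 (.and φ ψ)
  | or {φ ψ} : IsDelta0 φ → IsDelta0 ψ → IsDelta0 (.or φ ψ)
  | imp {φ ψ} : IsDelta0 φ → IsDelta0 ψ → IsDelta0 (.imp φ ψ)
  | ballLt {φ} (x : ℕ) (t : Term) : x ∉ t.fv → IsDelta0 φ →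
      IsDelta0 (.allN x (.imp (.lt (.var x) t) φ))
  | bexLt {φ} (x : ℕ) (t : Term) : x ∉ t.fv → IsDelta0 φ →
      IsDelta0 (.exN x (.and (.lt (.var x) t) φ))

/-- Σ⁰₁ formulas: existential number quantifiers over a Δ⁰₀ matrix. -/
inductive IsSigma01 : Formula → Prop
  | delta0 {φ} : IsDelta0 φ → IsSigma01 φ
  | exN {φ} (x : ℕ) : IsSigma01 φ → IsSigma01 (.exN x φ)

/-- Π⁰₁ formulas. -/
inductive IsPi01 : Formula → Prop
  | delta0 {φ} : IsDelta0 φ → IsPi01 φ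
  | allN {φ} (x : ℕ) : IsPi01 φ → IsPi01 (.allN x φ)

/-- Σ⁰₂ formulas. -/
inductive IsSigma02 : Formula → Prop
  | pi01 {φ} : IsPi01 φ → IsSigma02 φ
  | exN {φ} (x : ℕ) : IsSigma02 φ → IsSigma02 (.exN x φ)

/-- Π¹₁ formulas: universal set quantifiers over an arithmetic matrix. -/
inductive IsPi11 : Formula → Prop
  | arith {φ} : φ.IsArithmetic → IsPi11 φ
  | allS {φ} (X : ℕ) : IsPi11 φ → IsPi11 (.allS X φ)

/-- Quantifier-free `L₁`-formulas (no set variables, no quantifiers). -/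
inductive IsQFL1 : Formula → Prop
  | eq (t s : Term) : IsQFL1 (.eq t s)
  | lt (t s : Term) : IsQFL1 (.lt t s)
  | not {φ} : IsQFL1 φ → IsQFL1 (.not φ)
  | and {φ ψ} : IsQFL1 φ → IsQFL1 ψ → IsQFL1 (.and φ ψ)
  | or {φ ψ} : IsQFL1 φ → IsQFL1 ψ → IsQFL1 (.or φ ψ)
  | imp {φ ψ} : IsQFL1 φ → IsQFL1 ψ → IsQFL1 (.imp φ ψ)

/-- Existential `L₁`-formulas. -/
inductive IsExistentialL1 : Formula → Prop
  | qf {φ} : IsQFL1 φ → IsExistentialL1 φ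
  | exN {φ} (x : ℕ) : IsExistentialL1 φ → IsExistentialL1 (.exN x φ)

def Term.subst (x : ℕ) (t : Term) : Term → Term
  | .var i => if i = x then t else .var i
  | .zero => .zero
  | .one => .one
  | .add a b => .add (Term.subst x t a) (Term.subst x t b)
  | .mul a b => .mul (Term.subst x t a) (Term.subst x t b)

/-- Substitution of the term `t` for the number variable `x` (used only with terms all of
whose variables are `x` itself, where it is capture-free). -/
def Formula.substN (x : ℕ) (t : Term) : Formula → Formula
  | .eq a b => .eq (Term.subst x t a) (Term.subst x t b)
  | .lt a b => .lt (Term.subst x t a) (Term.subst x t b)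
  | .mem a X => .mem (Term.subst x t a) X
  | .not φ => .not (φ.substN x t)
  | .and φ ψ => .and (φ.substN x t) (ψ.substN x t)
  | .or φ ψ => .or (φ.substN x t) (ψ.substN x t)
  | .imp φ ψ => .imp (φ.substN x t) (ψ.substN x t)
  | .allN y φ => if y = x then .allN y φ else .allN y (φ.substN x t)
  | .exN y φ => if y = x then .exN y φ else .exN y (φ.substN x t)
  | .allS X φ => .allS X (φ.substN x t)
  | .exS X φ => .exS X (φ.substN x t)

/-- `(M,S)` is a model of the theory `Γ` (schemes are read with free variables as
universally quantified parameters). -/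
def Models2 (M : L1Struc) (S : Set (Set M.carrier)) (Γ : Set Formula) : Prop :=
  ∀ φ ∈ Γ, ∀ (v : ℕ → M.carrier) (V : ℕ → Set M.carrier), (∀ i, V i ∈ S) → φ.Sat M S v V

/-- `Γ ⊢ φ`, rendered as semantic consequence over all Henkin models (equivalently,
derivability, by the Gödel completeness theorem). -/
def Proves (Γ : Set Formula) (φ : Formula) : Prop :=
  ∀ (M : L1Struc) (S : Set (Set M.carrier)), Models2 M S Γ →
    ∀ (v : ℕ → M.carrier) (V : ℕ → Set M.carrier), (∀ i, V i ∈ S) → φ.Sat M S v V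

/-- `Γ` is consistent (has a model). -/
def SemConsistent (Γ : Set Formula) : Prop :=
  ∃ (M : L1Struc) (S : Set (Set M.carrier)), Models2 M S Γ

/-- The Δ⁰₁-comprehension scheme. -/
def Delta01CA : Set Formula :=
  { F | ∃ (φ₀ φ₁ : Formula) (x X : ℕ), IsSigma01 φ₀ ∧ IsSigma01 φ₁ ∧
      X ∉ φ₀.setFV ∧ X ∉ φ₁.setFV ∧
      F = .imp (.allN x (Formula.iff φ₀ (.not φ₁)))
            (.exS X (.allN x (Formula.iff (.mem (.var x) X) φ₀))) }

/-- The Σ⁰₁-induction scheme. -/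
def ISigma01 : Set Formula :=
  { F | ∃ (φ : Formula) (x : ℕ), IsSigma01 φ ∧
      F = .imp (.and (φ.substN x .zero) (.allN x (.imp φ (φ.substN x (.add (.var x) .one)))))
            (.allN x φ) }

def ax1 : Formula := .not (.eq (.add (.var 0) .one) .zero)
def ax2 : Formula := .imp (.eq (.add (.var 0) .one) (.add (.var 1) .one)) (.eq (.var 0) (.var 1))
def ax3 : Formula := .eq (.add (.var 0) .zero) (.var 0)
def ax4 : Formula := .eq (.add (.var 0) (.add (.var 1) .one)) (.add (.add (.var 0) (.var 1)) .one)
def ax5 : Formula := .eq (.mul (.var 0) .zero) .zero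
def ax6 : Formula := .eq (.mul (.var 0) (.add (.var 1) .one)) (.add (.mul (.var 0) (.var 1)) (.var 0))
def ax7 : Formula := .not (.lt (.var 0) .zero)
def ax8 : Formula :=
  Formula.iff (.lt (.var 0) (.add (.var 1) .one)) (.or (.lt (.var 0) (.var 1)) (.eq (.var 0) (.var 1)))

/-- The basic (PA⁻) axioms of `RCA₀`. -/
def BasicAx : Set Formula := {ax1, ax2, ax3, ax4, ax5, ax6, ax7, ax8}

/-- The theory `RCA₀`. -/
def RCA0 : Set Formula := BasicAx ∪ ISigma01 ∪ Delta01CA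

/-- The Σ⁰₂-bounding scheme `BΣ⁰₂`. -/
def BSigma02 : Set Formula :=
  { F | ∃ (φ : Formula) (n i k b : ℕ), IsSigma02 φ ∧
      n ∉ φ.numFV ∧ b ∉ φ.numFV ∧
      n ≠ i ∧ n ≠ k ∧ n ≠ b ∧ i ≠ k ∧ i ≠ b ∧ k ≠ b ∧
      F = .allN n (.imp (.allN i (.imp (.lt (.var i) (.var n)) (.exN k φ)))
            (.exN b (.allN i (.imp (.lt (.var i) (.var n))
              (.exN k (.and (.or (.lt (.var k) (.var b)) (.eq (.var k) (.var b))) φ)))))) }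

/-- The Π¹₁ sentences true in the standard model `(ℕ, 𝒫(ℕ))`. -/
def TruePi11 : Set Formula :=
  { φ | IsPi11 φ ∧ φ.numFV = ∅ ∧ φ.setFV = ∅ ∧
        φ.Sat stdM Set.univ (fun _ => stdM.zero) (fun _ => (∅ : Set stdM.carrier)) }

/-- `Γ` is an extension of Δ⁰₁-comprehension by Π¹₁ formulas. -/
def ExtByPi11 (Γ : Set Formula) : Prop :=
  Delta01CA ⊆ Γ ∧ ∀ φ ∈ Γ, φ ∈ Delta01CA ∨ IsPi11 φ

/-! ### Π¹₂-problems -/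

/-- A Π¹₂-problem, given by arithmetic formulas `Θ(X)` (set variable `0`) and
`Ψ(X,Y)` (set variables `0`, `1`). -/
structure Pi12Problem where
  theta : Formula
  psi : Formula

def Pi12Problem.WellFormed (P : Pi12Problem) : Prop :=
  P.theta.IsArithmetic ∧ P.psi.IsArithmetic ∧
  P.theta.numFV = ∅ ∧ P.psi.numFV = ∅ ∧
  P.theta.setFV ⊆ {0} ∧ P.psi.setFV ⊆ {0, 1}

/-- `X` is an `M`-instance of `P`. -/
def Pi12Problem.Inst (P : Pi12Problem) (M : L1Struc) (X : Set M.carrier) : Prop :=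
  P.theta.Sat M Set.univ (fun _ => M.zero) (fun _ => X)

/-- `Y` is a solution to the `M`-instance `X` of `P`. -/
def Pi12Problem.Sol (P : Pi12Problem) (M : L1Struc) (X Y : Set M.carrier) : Prop :=
  P.psi.Sat M Set.univ (fun _ => M.zero) (fun i => if i = 0 then X else Y)

/-- The sentence `∀X (Θ(X) → ∃Y Ψ(X,Y))`. -/
def Pi12Problem.toSentence (P : Pi12Problem) : Formula :=
  .allS 0 (.imp P.theta (.exS 1 P.psi))

/-! ### Δ⁰₁-definability, `M[X₀,…,Xₙ]`, consistency with a theory -/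

/-- `X` is Δ⁰₁-definable over `M` with number parameters and set parameters from `Ps`. -/
def Delta1Def (M : L1Struc) (Ps : Set (Set M.carrier)) (X : Set M.carrier) : Prop :=
  ∃ (φ₀ φ₁ : Formula) (x : ℕ) (v : ℕ → M.carrier) (V : ℕ → Set M.carrier),
    IsSigma01 φ₀ ∧ IsSigma01 φ₁ ∧
    (∀ i ∈ φ₀.setFV ∪ φ₁.setFV, V i ∈ Ps) ∧
    (∀ a, φ₀.Sat M Set.univ (Function.update v x a) V ↔
          ¬ φ₁.Sat M Set.univ (Function.update v x a) V) ∧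
    X = {a | φ₀.Sat M Set.univ (Function.update v x a) V}

/-- The second-order part of `M[X₀,…,Xₙ]` for `Ps = {X₀,…,Xₙ}`. -/
def Mcl (M : L1Struc) (Ps : Set (Set M.carrier)) : Set (Set M.carrier) :=
  { X | Delta1Def M Ps X }

def histL (M : L1Struc) (f : ℕ → Set M.carrier) (n : ℕ) : List (Set M.carrier) :=
  (List.range (n+1)).map f

/-- The structure `M[X₀,…,Xₙ]` determined by a history of Player 1 moves. -/
def Board (M : L1Struc) (hist : List (Set M.carrier)) : Set (Set M.carrier) :=
  Mcl M { X | X ∈ hist }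

/-- An `L₂`-structure `(M,S)` is consistent with `Γ`: it is contained in a model of `Γ`
with the same first-order part. -/
def ConsWith (M : L1Struc) (S : Set (Set M.carrier)) (Γ : Set Formula) : Prop :=
  ∃ T, S ⊆ T ∧ Models2 M T Γ

/-- `S` is closed under Δ⁰₁-comprehension (with parameters from `S`). -/
def D01Closed (M : L1Struc) (S : Set (Set M.carrier)) : Prop :=
  ∀ X, Delta1Def M S X → X ∈ S

/-- The join `X ⊕ Y` inside `M`. -/
def joinM (M : L1Struc) (X Y : Set M.carrier) : Set M.carrier :=
  { c | (∃ a ∈ X, c = M.add a a) ∨ (∃ a ∈ Y, c = M.add (M.add a a) M.one) }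

/-- `X₀ ⊕ X₁ ⊕ ⋯ ⊕ Xₙ` (associated to the left). -/
def joinList (M : L1Struc) : List (Set M.carrier) → Set M.carrier
  | [] => ∅
  | X :: rest => rest.foldl (joinM M) X

/-- Numerals in `M`. -/
def numM (M : L1Struc) : ℕ → M.carrier
  | 0 => M.zero
  | n+1 => M.add (numM M n) M.one

/-! ### Reduction games

A run is given by Player 1's moves `f 0, f 1, …` and Player 2's moves `g 0, g 1, …`,
where `g n` is Player 2's reply (a victory flag together with a set) to `f 0, …, f n`.
`C` is the side condition on Player 1's histories (consistency with `Γ` for `G^Γ`,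
membership in `S` for the modified game `Ĝ^Γ`, trivial for the game over `ω`). -/

/-- The run is still alive after Player 1's move at stage `n` (all moves so far legal,
Player 2 has not yet declared victory). -/
def Alive (P Q : Pi12Problem) (M : L1Struc) (C : List (Set M.carrier) → Prop)
    (f : ℕ → Set M.carrier) (g : ℕ → Prop × Set M.carrier) : ℕ → Prop
  | 0 => P.Inst M (f 0) ∧ C (histL M f 0)
  | n+1 => Alive P Q M C f g n ∧ ¬ (g n).1 ∧ (g n).2 ∈ Board M (histL M f n) ∧
      Q.Inst M ((g n).2) ∧ Q.Sol M ((g n).2) (f (n+1)) ∧ C (histL M f (n+1))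

/-- Player 2's move at stage `n` is a legal winning move. -/
def P2WinMove (P : Pi12Problem) (M : L1Struc) (f : ℕ → Set M.carrier)
    (g : ℕ → Prop × Set M.carrier) (n : ℕ) : Prop :=
  (g n).1 ∧ (g n).2 ∈ Board M (histL M f n) ∧ P.Sol M (f 0) ((g n).2)

/-- Player 2's move at stage `n` is a legal continuing move (an instance of `Q`). -/
def P2ContMove (Q : Pi12Problem) (M : L1Struc) (f : ℕ → Set M.carrier)
    (g : ℕ → Prop × Set M.carrier) (n : ℕ) : Prop :=
  ¬ (g n).1 ∧ (g n).2 ∈ Board M (histL M f n) ∧ Q.Inst M ((g n).2)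

/-- Player 2 wins the run `(f,g)`: its moves are always legal while the run is alive, and
the run does not go on forever. -/
def P2WinsRun (P Q : Pi12Problem) (M : L1Struc) (C : List (Set M.carrier) → Prop)
    (f : ℕ → Set M.carrier) (g : ℕ → Prop × Set M.carrier) : Prop :=
  (∀ n, Alive P Q M C f g n → (P2ContMove Q M f g n ∨ P2WinMove P M f g n)) ∧
  ¬ (∀ n, Alive P Q M C f g n)

/-- Player 2 wins the run `(f,g)` within at most `n₀` moves. -/
def P2WinsRunWithin (P Q : Pi12Problem) (M : L1Struc) (C : List (Set M.carrier) → Prop)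
    (f : ℕ → Set M.carrier) (g : ℕ → Prop × Set M.carrier) (n₀ : ℕ) : Prop :=
  (∀ n, Alive P Q M C f g n → (P2ContMove Q M f g n ∨ P2WinMove P M f g n)) ∧
  ¬ Alive P Q M C f g n₀

/-- Side condition for `G^Γ`: each `M[X₀,…,Xₙ]` must be consistent with `Γ`. -/
def CondG (Γ : Set Formula) (M : L1Struc) (hist : List (Set M.carrier)) : Prop :=
  ConsWith M (Board M hist) Γ

/-- Side condition for `Ĝ^Γ`: Player 1's moves must lie in `S`. -/
def CondS (M : L1Struc) (S : Set (Set M.carrier)) (hist : List (Set M.carrier)) : Prop :=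
  ∀ X ∈ hist, X ∈ S

/-- Player 2 has a winning strategy for `G^Γ(Q → P)`. -/
def P2HasWinG (Γ : Set Formula) (P Q : Pi12Problem) : Prop :=
  ∃ σ : (M : L1Struc) → List (Set M.carrier) → Prop × Set M.carrier,
    ∀ M : L1Struc, Countable M.carrier → ∀ f,
      P2WinsRun P Q M (CondG Γ M) f (fun n => σ M (histL M f n))

/-- Player 2 has a winning strategy for `G^Γ(Q → P)` ensuring victory within `n₀` moves. -/
def P2HasWinGWithin (Γ : Set Formula) (P Q : Pi12Problem) (n₀ : ℕ) : Prop :=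
  ∃ σ : (M : L1Struc) → List (Set M.carrier) → Prop × Set M.carrier,
    ∀ M : L1Struc, Countable M.carrier → ∀ f,
      P2WinsRunWithin P Q M (CondG Γ M) f (fun n => σ M (histL M f n)) n₀

/-- Player 2 has a winning strategy for the modified game `Ĝ^Γ(Q → P)`. -/
def P2HasWinHat (Γ : Set Formula) (P Q : Pi12Problem) : Prop :=
  ∃ σ : (M : L1Struc) → Set (Set M.carrier) → List (Set M.carrier) → Prop × Set M.carrier,
    ∀ (M : L1Struc) (S : Set (Set M.carrier)), Countable M.carrier →
      Models2 M S Γ → D01Closed M S → ∀ f,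
        P2WinsRun P Q M (CondS M S) f (fun n => σ M S (histL M f n))

/-- Player 2 has a winning strategy for `Ĝ^Γ(Q → P)` ensuring victory within `n₀` moves. -/
def P2HasWinHatWithin (Γ : Set Formula) (P Q : Pi12Problem) (n₀ : ℕ) : Prop :=
  ∃ σ : (M : L1Struc) → Set (Set M.carrier) → List (Set M.carrier) → Prop × Set M.carrier,
    ∀ (M : L1Struc) (S : Set (Set M.carrier)), Countable M.carrier →
      Models2 M S Γ → D01Closed M S → ∀ f,
        P2WinsRunWithin P Q M (CondS M S) f (fun n => σ M S (histL M f n)) n₀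

/-- A strategy for Player 1 in `G^Γ`. -/
structure P1StratG where
  M : L1Struc
  first : Set M.carrier
  next : List (Prop × Set M.carrier) → Set M.carrier

def P1StratG.play (τ : P1StratG) (g : ℕ → Prop × Set τ.M.carrier) : ℕ → Set τ.M.carrier
  | 0 => τ.first
  | n+1 => τ.next ((List.range (n+1)).map g)

/-- Player 1 wins the run `(f,g)`: the first move is legal, Player 2 never makes a legal
winning move, and Player 1 can always respond legally. -/
def P1WinsRun (P Q : Pi12Problem) (M : L1Struc) (C : List (Set M.carrier) → Prop)
    (f : ℕ → Set M.carrier) (g : ℕ → Prop × Set M.carrier) : Prop :=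
  Alive P Q M C f g 0 ∧
  ∀ n, Alive P Q M C f g n →
    (¬ P2WinMove P M f g n ∧ (P2ContMove Q M f g n → Alive P Q M C f g (n+1)))

/-- Player 1 has a winning strategy for `G^Γ(Q → P)`. -/
def P1HasWinG (Γ : Set Formula) (P Q : Pi12Problem) : Prop :=
  ∃ τ : P1StratG, Countable τ.M.carrier ∧
    ∀ g, P1WinsRun P Q τ.M (CondG Γ τ.M) (τ.play g) g

/-- A strategy for Player 1 in the modified game `Ĝ^Γ` (its first move includes a model `(M,S)`). -/
structure P1StratHat where
  M : L1Struc
  S : Set (Set M.carrier)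
  first : Set M.carrier
  next : List (Prop × Set M.carrier) → Set M.carrier

def P1StratHat.play (τ : P1StratHat) (g : ℕ → Prop × Set τ.M.carrier) : ℕ → Set τ.M.carrier
  | 0 => τ.first
  | n+1 => τ.next ((List.range (n+1)).map g)

/-- Player 1 has a winning strategy for `Ĝ^Γ(Q → P)`. -/
def P1HasWinHat (Γ : Set Formula) (P Q : Pi12Problem) : Prop :=
  ∃ τ : P1StratHat, Countable τ.M.carrier ∧ Models2 τ.M τ.S Γ ∧ D01Closed τ.M τ.S ∧
    ∀ g, P1WinsRun P Q τ.M (CondS τ.M τ.S) (τ.play g) g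

/-! ### Universal Σ⁰₁ formulas and the functionals `Φₑ` -/

/-- Cantor pairing, as a relation in `M`: `e = ⟨i,j⟩` iff `2e = (i+j)² + (i+j) + 2i`. -/
def cantorPairRel (M : L1Struc) (i j e : M.carrier) : Prop :=
  M.add e e = M.add (M.add (M.mul (M.add i j) (M.add i j)) (M.add i j)) (M.add i i)

/-- Satisfaction of `θ(i, n, X)` (number variables `0`, `1`; set variable `0`). -/
def satIdx (θ : Formula) (M : L1Struc) (i n : M.carrier) (X : Set M.carrier) : Prop :=
  θ.Sat M Set.univ (fun m => if m = 0 then i else if m = 1 then n else M.zero) (fun _ => X)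

/-- `Y = Φₑ^X` in `M`, relative to the universal Σ⁰₁ formula `θ`. -/
def IsPhi (θ : Formula) (M : L1Struc) (e : M.carrier) (X Y : Set M.carrier) : Prop :=
  ∃ i j : M.carrier, cantorPairRel M i j e ∧
    (∀ n, satIdx θ M i n X ↔ ¬ satIdx θ M j n X) ∧
    (∀ n, n ∈ Y ↔ satIdx θ M i n X)

def GoodSigma (φ : Formula) : Prop :=
  IsSigma01 φ ∧ φ.numFV ⊆ {0, 1} ∧ φ.setFV ⊆ {0}

/-- `θ` is a universal Σ⁰₁ formula, provably in `Γ`. -/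
def UnivSigma01 (Γ : Set Formula) (θ : Formula) : Prop :=
  GoodSigma θ ∧ ∀ φ, GoodSigma φ →
    ∀ (M : L1Struc) (S : Set (Set M.carrier)), Models2 M S Γ →
      ∀ e : M.carrier, ∃ i : M.carrier, ∀ n : M.carrier, ∀ X ∈ S,
        (satIdx θ M i n X ↔ satIdx φ M e n X)

/-- `θ` is a universal Σ⁰₁ formula over the standard model. -/
def UnivSigma01Std (θ : Formula) : Prop :=
  GoodSigma θ ∧ ∀ φ, GoodSigma φ →
    ∀ e : stdM.carrier, ∃ i : stdM.carrier, ∀ (n : stdM.carrier) (X : Set stdM.carrier),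
      (satIdx θ stdM i n X ↔ satIdx φ stdM e n X)

/-! ### Computable strategies for Player 2 -/

/-- The move prescribed by the computable strategy with index `k` at the given history:
Player 2 plays `Z = Φ_e^{X₀⊕⋯⊕Xₙ}` where `e = Φ_k(n)`; by the coding convention, `Z`
declares victory iff `0 ∈ Z`, with payload `{a : a+1 ∈ Z}`. -/
def CodeMove (θ : Formula) (M : L1Struc) (k : Nat.Partrec.Code)
    (hist : List (Set M.carrier)) (mv : Prop × Set M.carrier) : Prop :=
  ∃ e : ℕ, e ∈ k.eval (hist.length - 1) ∧
    ∃ Z : Set M.carrier, IsPhi θ M (numM M e) (joinList M hist) Z ∧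
      mv = ((M.zero ∈ Z), { a | M.add a M.one ∈ Z })

/-- The computable strategy `k` wins every run of the game over `M` with side condition `C`. -/
def P2CompWinsC (θ : Formula) (k : Nat.Partrec.Code) (P Q : Pi12Problem) (M : L1Struc)
    (C : List (Set M.carrier) → Prop) : Prop :=
  ∀ f g,
    ((∀ n, (∀ m < n, Alive P Q M C f g m → CodeMove θ M k (histL M f m) (g m)) →
        Alive P Q M C f g n → ∃ mv, CodeMove θ M k (histL M f n) mv) ∧
     ((∀ n, Alive P Q M C f g n → CodeMove θ M k (histL M f n) (g n)) →
        P2WinsRun P Q M C f g))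

def P2CompWinsCWithin (θ : Formula) (k : Nat.Partrec.Code) (P Q : Pi12Problem) (M : L1Struc)
    (C : List (Set M.carrier) → Prop) (n₀ : ℕ) : Prop :=
  ∀ f g,
    ((∀ n, (∀ m < n, Alive P Q M C f g m → CodeMove θ M k (histL M f m) (g m)) →
        Alive P Q M C f g n → ∃ mv, CodeMove θ M k (histL M f n) mv) ∧
     ((∀ n, Alive P Q M C f g n → CodeMove θ M k (histL M f n) (g n)) →
        P2WinsRunWithin P Q M C f g n₀))

/-- Player 2 has a computable winning strategy for `G^Γ(Q → P)`. -/
def P2CompWinsG (Γ : Set Formula) (θ : Formula) (P Q : Pi12Problem) : Prop :=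
  ∃ k : Nat.Partrec.Code, ∀ M : L1Struc, Countable M.carrier →
    P2CompWinsC θ k P Q M (CondG Γ M)

def P2CompWinsGWithin (Γ : Set Formula) (θ : Formula) (P Q : Pi12Problem) (n₀ : ℕ) : Prop :=
  ∃ k : Nat.Partrec.Code, ∀ M : L1Struc, Countable M.carrier →
    P2CompWinsCWithin θ k P Q M (CondG Γ M) n₀

/-- Player 2 has a computable winning strategy for `Ĝ^Γ(Q → P)`. -/
def P2CompWinsHat (Γ : Set Formula) (θ : Formula) (P Q : Pi12Problem) : Prop :=
  ∃ k : Nat.Partrec.Code, ∀ (M : L1Struc) (S : Set (Set M.carrier)), Countable M.carrier →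
    Models2 M S Γ → D01Closed M S → P2CompWinsC θ k P Q M (CondS M S)

def P2CompWinsHatWithin (Γ : Set Formula) (θ : Formula) (P Q : Pi12Problem) (n₀ : ℕ) : Prop :=
  ∃ k : Nat.Partrec.Code, ∀ (M : L1Struc) (S : Set (Set M.carrier)), Countable M.carrier →
    Models2 M S Γ → D01Closed M S → P2CompWinsCWithin θ k P Q M (CondS M S) n₀

/-- Player 2 has a computable winning strategy for the game `G(Q → P)` over the standard
natural numbers. -/
def P2CompWinsStd (θ : Formula) (P Q : Pi12Problem) : Prop :=
  ∃ k : Nat.Partrec.Code, P2CompWinsC θ k P Q stdM (fun _ => True)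

def P2CompWinsStdWithin (θ : Formula) (P Q : Pi12Problem) (n₀ : ℕ) : Prop :=
  ∃ k : Nat.Partrec.Code, P2CompWinsCWithin θ k P Q stdM (fun _ => True) n₀

/-- Player 2 has a winning strategy for the game `G(Q → P)` over the standard natural
numbers ensuring victory within `n₀` moves. -/
def P2HasWinStdWithin (P Q : Pi12Problem) (n₀ : ℕ) : Prop :=
  ∃ σ : List (Set stdM.carrier) → Prop × Set stdM.carrier,
    ∀ f, P2WinsRunWithin P Q stdM (fun _ => True) f (fun n => σ (histL stdM f n)) n₀

/-- `P ≤ω^n Q`: Player 2 wins `G(Q → P)` over `ω` in at most `n+1` moves. -/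
def leOmegaN (P Q : Pi12Problem) (n : ℕ) : Prop := P2HasWinStdWithin P Q (n+1)

/-- Weihrauch reducibility over `Γ` (relative to the universal Σ⁰₁ formula `θ`). -/
def WRed (Γ : Set Formula) (θ : Formula) (P Q : Pi12Problem) : Prop :=
  ∃ e i : ℕ, ∀ (M : L1Struc) (S : Set (Set M.carrier)),
    Countable M.carrier → Models2 M S Γ → D01Closed M S →
    ∀ X ∈ S, P.Inst M X →
      ∃ Xh : Set M.carrier, IsPhi θ M (numM M e) X Xh ∧ Q.Inst M Xh ∧
        ∀ Yh ∈ S, Q.Sol M Xh Yh →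
          ∃ Ys : Set M.carrier, IsPhi θ M (numM M i) (joinM M X Yh) Ys ∧ P.Sol M X Ys

/-! ### Runs played according to an arithmetic formula `Λ(X,n,e)` -/

/-- The run `(f,g)` is played by Player 2 according to `Λ`: at each alive stage `n`, Player 2
plays (the coded move of) `Φ_e^{X₀⊕⋯⊕Xₙ}` for some `e ∈ M` with
`M[X₀,…,Xₙ] ⊨ Λ(X₀⊕⋯⊕Xₙ, n, e)`. -/
def AccordsLambda (θ Λ : Formula) (P Q : Pi12Problem) (M : L1Struc)
    (C : List (Set M.carrier) → Prop) (f : ℕ → Set M.carrier)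
    (g : ℕ → Prop × Set M.carrier) : Prop :=
  ∀ n, Alive P Q M C f g n → ∃ (e : M.carrier) (Z : Set M.carrier),
    Λ.Sat M Set.univ (fun m => if m = 0 then numM M n else if m = 1 then e else M.zero)
      (fun _ => joinList M (histL M f n)) ∧
    IsPhi θ M e (joinList M (histL M f n)) Z ∧
    g n = ((M.zero ∈ Z), { a | M.add a M.one ∈ Z })

/-! ### Semantic rendering of the formulas `Θₙ` and `Δₙ` -/

/-- Satisfaction of the matrix `Θₙ`, given `X₀`, the current join `J`, the pairs
`(e_j, Y_j)` and the remaining `X_{j+1}, …`. -/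
def ThetaSat (θ : Formula) (P Q : Pi12Problem) (M : L1Struc) (X0 : Set M.carrier) :
    Set M.carrier → List (M.carrier × Set M.carrier) → List (Set M.carrier) → Prop
  | _, [], _ => True
  | J, [(e, Y)], _ => IsPhi θ M e J Y ∧ P.Sol M X0 Y
  | _, _ :: _ :: _, [] => True
  | J, (e, Y) :: eY' :: eYs, X :: Xs =>
      IsPhi θ M e J Y ∧ (P.Sol M X0 Y ∨ (Q.Inst M Y ∧ (Q.Sol M Y X →
        ThetaSat θ P Q M X0 (joinM M J X) (eY' :: eYs) Xs)))

def DeltaSatFin (θ : Formula) (P Q : Pi12Problem) (M : L1Struc)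
    (Xs : List (Set M.carrier)) (eYs : List (M.carrier × Set M.carrier)) : Prop :=
  match Xs with
  | [] => True
  | X0 :: rest => P.Inst M X0 → ThetaSat θ P Q M X0 X0 eYs rest

def DeltaSatAux (θ : Formula) (P Q : Pi12Problem) (M : L1Struc) (S : Set (Set M.carrier)) :
    ℕ → List (Set M.carrier) → List (M.carrier × Set M.carrier) → Prop
  | 0, Xs, eYs => DeltaSatFin θ P Q M Xs eYs
  | k+1, Xs, eYs => ∀ X ∈ S, ∃ e : M.carrier, ∃ Y ∈ S,
      DeltaSatAux θ P Q M S k (Xs ++ [X]) (eYs ++ [(e, Y)])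

/-- `(M,S) ⊨ Δₙ`, i.e. `∀X₀ ∃e₀,Y₀ ⋯ ∀Xₙ ∃eₙ,Yₙ Θₙ(…)`. -/
def DeltaSat (θ : Formula) (P Q : Pi12Problem) (M : L1Struc) (S : Set (Set M.carrier))
    (n : ℕ) : Prop :=
  DeltaSatAux θ P Q M S (n+1) [] []

/-! ### Concrete Π¹₂-problems -/

/-- The pairing term `π(t,s) = (t+s)·(t+s) + t`. -/
def pairT (t s : Term) : Term := .add (.mul (.add t s) (.add t s)) t

def Term.ofNat : ℕ → Term
  | 0 => .zero
  | n+1 => .add (Term.ofNat n) .one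

def trueF : Formula := .eq .zero .zero

def leF (t s : Term) : Formula := .or (.lt t s) (.eq t s)

/-- "The set variable `s` names an infinite set" (using number variables `a`, `b`). -/
def infiniteF (s a b : ℕ) : Formula :=
  .allN a (.exN b (.and (.lt (.var a) (.var b)) (.mem (.var b) s)))

/-- `LH`: instances are `c : [ℕ]² → 2` with `lim_y c(x,y) = 1` for all `x`
(coded as the set of codes `π(x,y)`, `x<y`, of pairs colored `1`); solutions are
infinite homogeneous sets. -/
def LH : Pi12Problem where
  theta := .allN 0 (.exN 1 (.allN 2 (.imp (.and (.lt (.var 0) (.var 2)) (.lt (.var 1) (.var 2)))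
    (.mem (pairT (.var 0) (.var 2)) 0))))
  psi := .and (infiniteF 1 0 1)
    (.or
      (.allN 0 (.allN 1 (.imp
        (.and (.mem (.var 0) 1) (.and (.mem (.var 1) 1) (.lt (.var 0) (.var 1))))
        (.mem (pairT (.var 0) (.var 1)) 0))))
      (.allN 0 (.allN 1 (.imp
        (.and (.mem (.var 0) 1) (.and (.mem (.var 1) 1) (.lt (.var 0) (.var 1))))
        (.not (.mem (pairT (.var 0) (.var 1)) 0))))))

/-- `Bound*`: an instance is a simultaneous enumeration of a finite family `F₀,…,F_k` of
bounded sets (marker `π(0,k)`; entries `π(i+1, π(n,s))` meaning `n` enters `F_i` at stage `s`);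
a solution is (the singleton of) a common bound. -/
def BoundStar : Pi12Problem where
  theta := .exN 0 (.and (.mem (pairT .zero (.var 0)) 0)
    (.and (.allN 1 (.imp (.mem (pairT .zero (.var 1)) 0) (.eq (.var 1) (.var 0))))
      (.and (.allN 1 (.imp (.mem (.var 1) 0)
          (.or (.exN 2 (.eq (.var 1) (pairT .zero (.var 2))))
               (.exN 2 (.and (leF (.var 2) (.var 0))
                 (.exN 3 (.exN 4 (.eq (.var 1)
                   (pairT (.add (.var 2) .one) (pairT (.var 3) (.var 4)))))))))))
        (.allN 1 (.imp (leF (.var 1) (.var 0))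
          (.exN 2 (.allN 3 (.allN 4 (.imp
            (.mem (pairT (.add (.var 1) .one) (pairT (.var 3) (.var 4))) 0)
            (leF (.var 3) (.var 2)))))))))))
  psi := .exN 0 (.and (.mem (.var 0) 1)
    (.and (.allN 1 (.imp (.mem (.var 1) 1) (.eq (.var 1) (.var 0))))
      (.allN 1 (.allN 2 (.allN 3 (.imp
        (.mem (pairT (.add (.var 1) .one) (pairT (.var 2) (.var 3))) 0)
        (leF (.var 2) (.var 0))))))))

/-- `stBound*`: an instance is an enumeration of a set `X ⊆ ℕ×ℕ` (entries `π(π(n,k),s)`)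
such that `{n : ∃k (n,k) ∈ X}` is bounded and each `{k : (n,k) ∈ X}` is bounded; a solution
is (the singleton of) a bound on `{k : ∃n (n,k) ∈ X}`. -/
def stBoundStar : Pi12Problem where
  theta := .and (.allN 0 (.imp (.mem (.var 0) 0)
        (.exN 1 (.exN 2 (.exN 3 (.eq (.var 0) (pairT (pairT (.var 1) (.var 2)) (.var 3))))))))
    (.and (.exN 0 (.allN 1 (.allN 2 (.allN 3 (.imp
        (.mem (pairT (pairT (.var 1) (.var 2)) (.var 3)) 0) (leF (.var 1) (.var 0)))))))
      (.allN 1 (.exN 0 (.allN 2 (.allN 3 (.imp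
        (.mem (pairT (pairT (.var 1) (.var 2)) (.var 3)) 0) (leF (.var 2) (.var 0))))))))
  psi := .exN 0 (.and (.mem (.var 0) 1)
    (.and (.allN 1 (.imp (.mem (.var 1) 1) (.eq (.var 1) (.var 0))))
      (.allN 1 (.allN 2 (.allN 3 (.imp
        (.mem (pairT (pairT (.var 1) (.var 2)) (.var 3)) 0)
        (leF (.var 2) (.var 0))))))))

/-- `stRT¹_{<∞}`: instances are functions `c : ℕ → ℕ` with bounded range (coded as sets of
codes `π(x, c(x))`); solutions are infinite sets on which `c` is constant. -/
def stRT1inf : Pi12Problem where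
  theta := .and (.allN 0 (.exN 1 (.and (.mem (pairT (.var 0) (.var 1)) 0)
        (.allN 2 (.imp (.mem (pairT (.var 0) (.var 2)) 0) (.eq (.var 2) (.var 1)))))))
    (.exN 1 (.allN 0 (.allN 2 (.imp (.mem (pairT (.var 0) (.var 2)) 0) (leF (.var 2) (.var 1))))))
  psi := .and (infiniteF 1 0 1)
    (.exN 0 (.allN 1 (.imp (.mem (.var 1) 1) (.mem (pairT (.var 1) (.var 0)) 0))))

/-- `C_ℕ`: an instance is an enumeration of the complement of a nonempty set `A`
(entries `π(n,s)` meaning `n` is enumerated out at stage `s`); a solution is (the singleton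
of) an element of `A`. -/
def CN : Pi12Problem where
  theta := .exN 0 (.allN 1 (.not (.mem (pairT (.var 0) (.var 1)) 0)))
  psi := .exN 0 (.and (.mem (.var 0) 1)
    (.and (.allN 1 (.imp (.mem (.var 1) 1) (.eq (.var 1) (.var 0))))
      (.allN 1 (.not (.mem (pairT (.var 0) (.var 1)) 0)))))

/-- The code `π(x_i, π(x_{i+1}, …, x_{i+c-1}))` of the tuple of variables `i, …, i+c-1`. -/
def varsCode : ℕ → ℕ → Term
  | _, 0 => .zero
  | i, 1 => .var i
  | i, c+2 => pairT (.var i) (varsCode (i+1) (c+1))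

/-- `x_i < x_{i+1} < ⋯ < x_{i+c-1}`. -/
def chainLt : ℕ → ℕ → Formula
  | _, 0 => trueF
  | _, 1 => trueF
  | i, c+2 => .and (.lt (.var i) (.var (i+1))) (chainLt (i+1) (c+1))

/-- `x_i ∈ s ∧ ⋯ ∧ x_{i+c-1} ∈ s` (for the set variable `s`). -/
def allMemS (s : ℕ) : ℕ → ℕ → Formula
  | _, 0 => trueF
  | i, c+1 => .and (.mem (.var i) s) (allMemS s (i+1) c)

/-- `∀ x_i ⋯ ∀ x_{i+c-1} φ`. -/
def allNs : ℕ → ℕ → Formula → Formula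
  | _, 0, φ => φ
  | i, c+1, φ => .allN i (allNs (i+1) c φ)

/-- `RTⁿ_k`: instances are colorings `c : [ℕ]ⁿ → k` (coded as sets of codes
`π(⟨x₁,…,xₙ⟩, v)` for `x₁<⋯<xₙ` and `v = c(x₁,…,xₙ) < k`); solutions are infinite
homogeneous sets. -/
def RTn (n k : ℕ) : Pi12Problem where
  theta := allNs 1 n (.imp (chainLt 1 n)
    (.exN 0 (.and (.lt (.var 0) (Term.ofNat k))
      (.and (.mem (pairT (varsCode 1 n) (.var 0)) 0)
        (.allN (n+1) (.imp (.mem (pairT (varsCode 1 n) (.var (n+1))) 0)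
          (.eq (.var (n+1)) (.var 0))))))))
  psi := .and (infiniteF 1 (n+1) (n+2))
    (.exN 0 (.and (.lt (.var 0) (Term.ofNat k))
      (allNs 1 n (.imp (.and (chainLt 1 n) (allMemS 1 1 n))
        (.mem (pairT (varsCode 1 n) (.var 0)) 0)))))

/-- `RTⁿ_{<∞}`: the number of colors is part of the instance (marker `π(0,k)`, entries
`π(1, π(⟨x₁,…,xₙ⟩, v))`). -/
def RTnInf (n : ℕ) : Pi12Problem where
  theta := .exN 0 (.and (.mem (pairT .zero (.var 0)) 0)
    (.and (.allN (n+1) (.imp (.mem (pairT .zero (.var (n+1))) 0) (.eq (.var (n+1)) (.var 0))))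
      (allNs 1 n (.imp (chainLt 1 n)
        (.exN (n+1) (.and (.lt (.var (n+1)) (.var 0))
          (.and (.mem (pairT .one (pairT (varsCode 1 n) (.var (n+1)))) 0)
            (.allN (n+2) (.imp (.mem (pairT .one (pairT (varsCode 1 n) (.var (n+2)))) 0)
              (.eq (.var (n+2)) (.var (n+1))))))))))))
  psi := .and (infiniteF 1 (n+1) (n+2))
    (.exN (n+1) (allNs 1 n (.imp (.and (chainLt 1 n) (allMemS 1 1 n))
      (.mem (pairT .one (pairT (varsCode 1 n) (.var (n+1)))) 0))))

/-! ### Material for Uftring's example (Statement 11) -/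

/-- `G` is (an arithmetization of) a primitive recursive predicate: a Σ⁰₁ formula in the
number variable `0`, `RCA₀`-provably equivalent to a Π⁰₁ formula, whose standard
extension is primitive recursive. -/
def PrimRecPred (G : Formula) : Prop :=
  IsSigma01 G ∧ G.numFV ⊆ {0} ∧ G.setFV = ∅ ∧
  (∃ π : Formula, IsPi01 π ∧ π.numFV ⊆ {0} ∧ π.setFV = ∅ ∧
      Proves RCA0 (Formula.iff G π)) ∧
  (∃ f : ℕ → Bool, Nat.Primrec (fun m => (f m).toNat) ∧
      ∀ m : ℕ, f m = true ↔
        G.Sat stdM Set.univ (fun i => if i = 0 then m else 0) (fun _ => (∅ : Set ℕ)))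

/-- Truth of `G(m)` in the standard model. -/
def satStd1 (G : Formula) (m : ℕ) : Prop :=
  G.Sat stdM Set.univ (fun i => if i = 0 then m else 0) (fun _ => (∅ : Set ℕ))

/-- The problem `P ≡ ∀X ∃Y ∀x G(x)`. -/
def PGprob (G : Formula) : Pi12Problem where
  theta := trueF
  psi := .allN 0 G

/-- The problem `Q ≡ ∀X [X ≠ ∅ → ∃Y G(μX)]`. -/
def QGprob (G : Formula) : Pi12Problem where
  theta := .exN 0 (.mem (.var 0) 0)
  psi := .exN 0 (.and (.mem (.var 0) 0)
    (.and (.allN 1 (.imp (.lt (.var 1) (.var 0)) (.not (.mem (.var 1) 0)))) G))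

/-! ### Material for Statement 13 -/

/-- A model of a sentence (all valuations into `S`). -/
def ModelsSent (M : L1Struc) (S : Set (Set M.carrier)) (φ : Formula) : Prop :=
  ∀ (v : ℕ → M.carrier) (V : ℕ → Set M.carrier), (∀ i, V i ∈ S) → φ.Sat M S v V

/-- The pairing function inside `M`. -/
def pairM (M : L1Struc) (x y : M.carrier) : M.carrier :=
  M.add (M.mul (M.add x y) (M.add x y)) x

/-- `j : ℕ → M` is an embedding of the standard model into `M`. -/
def L1Embed (M : L1Struc) (j : ℕ → M.carrier) : Prop :=
  j 0 = M.zero ∧ j 1 = M.one ∧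
  (∀ a b : ℕ, j (a + b) = M.add (j a) (j b)) ∧
  (∀ a b : ℕ, j (a * b) = M.mul (j a) (j b)) ∧
  (∀ a b : ℕ, a < b ↔ M.lt (j a) (j b)) ∧
  Function.Injective j

/-- `M` and the embedded standard model satisfy the same existential `L₁`-sentences with
parameters from `ℕ`. -/
def OneElementaryOverStd (M : L1Struc) (j : ℕ → M.carrier) : Prop :=
  ∀ φ, IsExistentialL1 φ → ∀ v : ℕ → ℕ,
    (φ.Sat stdM Set.univ v (fun _ => (∅ : Set ℕ)) ↔
     φ.Sat M Set.univ (fun i => j (v i)) (fun _ => (∅ : Set M.carrier)))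

/-- `A` is `M`-finite: Δ⁰₁-definable over `M` (without set parameters) and bounded. -/
def MFinite (M : L1Struc) (A : Set M.carrier) : Prop :=
  A ∈ Mcl M (∅ : Set (Set M.carrier)) ∧ ∃ b, ∀ x ∈ A, M.lt x b

/-- A total coloring (coded as the set `X` of codes of pairs colored `1`) extends the
condition `(m, p)` of the forcing notion `P_M`: it agrees with `p` below `m`, and colors
`(x,y)` with `1` whenever `x < m ≤ y`. -/
def ExtendsCond (M : L1Struc) (m : M.carrier) (p : Set M.carrier) (X : Set M.carrier) : Prop :=
  (∀ x y, M.lt x y → M.lt y m → (pairM M x y ∈ X ↔ pairM M x y ∈ p)) ∧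
  (∀ x y, M.lt x m → ¬ M.lt y m → M.lt x y → pairM M x y ∈ X)

end SOA

namespace SOA

/-! ### Auxiliary lemmas for Statement 7 -/

section Aux

open Classical in
/-- Term evaluation depends only on the values of free variables. -/
theorem Term.val_agree {M : L1Struc} {v v' : ℕ → M.carrier} :
    ∀ t : Term, (∀ i ∈ t.fv, v i = v' i) → t.val M v = t.val M v'
  | .var i, h => h i (by simp [Term.fv])
  | .zero, _ => rfl
  | .one, _ => rfl
  | .add t s, h => by
      simp only [Term.val]
      rw [Term.val_agree t fun i hi => h i (Set.mem_union_left _ hi),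
        Term.val_agree s fun i hi => h i (Set.mem_union_right _ hi)]
  | .mul t s, h => by
      simp only [Term.val]
      rw [Term.val_agree t fun i hi => h i (Set.mem_union_left _ hi),
        Term.val_agree s fun i hi => h i (Set.mem_union_right _ hi)]

/-- Satisfaction depends only on the values of free variables. -/
theorem Formula.sat_agree {M : L1Struc} {D : Set (Set M.carrier)} :
    ∀ (φ : Formula) {v v' : ℕ → M.carrier} {V V' : ℕ → Set M.carrier},
      (∀ i ∈ φ.numFV, v i = v' i) → (∀ i ∈ φ.setFV, V i = V' i) →
      (Formula.Sat M D v V φ ↔ Formula.Sat M D v' V' φ)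
  | .eq t s, v, v', V, V', hv, _ => by
      simp only [Formula.Sat]
      rw [Term.val_agree t fun i hi => hv i (Set.mem_union_left _ hi),
        Term.val_agree s fun i hi => hv i (Set.mem_union_right _ hi)]
  | .lt t s, v, v', V, V', hv, _ => by
      simp only [Formula.Sat]
      rw [Term.val_agree t fun i hi => hv i (Set.mem_union_left _ hi),
        Term.val_agree s fun i hi => hv i (Set.mem_union_right _ hi)]
  | .mem t X, v, v', V, V', hv, hV => by
      simp only [Formula.Sat]
      rw [Term.val_agree t fun i hi => hv i hi, hV X (by simp [Formula.setFV])]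
  | .not φ, v, v', V, V', hv, hV => by
      simp only [Formula.Sat]
      rw [Formula.sat_agree φ hv hV]
  | .and φ ψ, v, v', V, V', hv, hV => by
      simp only [Formula.Sat]
      rw [Formula.sat_agree φ (fun i hi => hv i (Set.mem_union_left _ hi))
          (fun i hi => hV i (Set.mem_union_left _ hi)),
        Formula.sat_agree ψ (fun i hi => hv i (Set.mem_union_right _ hi))
          (fun i hi => hV i (Set.mem_union_right _ hi))]
  | .or φ ψ, v, v', V, V', hv, hV => by
      simp only [Formula.Sat]
      rw [Formula.sat_agree φ (fun i hi => hv i (Set.mem_union_left _ hi))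
          (fun i hi => hV i (Set.mem_union_left _ hi)),
        Formula.sat_agree ψ (fun i hi => hv i (Set.mem_union_right _ hi))
          (fun i hi => hV i (Set.mem_union_right _ hi))]
  | .imp φ ψ, v, v', V, V', hv, hV => by
      simp only [Formula.Sat]
      rw [Formula.sat_agree φ (fun i hi => hv i (Set.mem_union_left _ hi))
          (fun i hi => hV i (Set.mem_union_left _ hi)),
        Formula.sat_agree ψ (fun i hi => hv i (Set.mem_union_right _ hi))
          (fun i hi => hV i (Set.mem_union_right _ hi))]
  | .allN x φ, v, v', V, V', hv, hV => by
      simp only [Formula.Sat]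
      refine forall_congr' fun a => Formula.sat_agree φ (fun i hi => ?_) hV
      by_cases hix : i = x
      · subst hix; simp
      · simp only [Function.update_of_ne hix]
        exact hv i (by simp [Formula.numFV, hi, hix])
  | .exN x φ, v, v', V, V', hv, hV => by
      simp only [Formula.Sat]
      refine exists_congr fun a => Formula.sat_agree φ (fun i hi => ?_) hV
      by_cases hix : i = x
      · subst hix; simp
      · simp only [Function.update_of_ne hix]
        exact hv i (by simp [Formula.numFV, hi, hix])
  | .allS X φ, v, v', V, V', hv, hV => by
      simp only [Formula.Sat]
      refine forall₂_congr fun A _ => Formula.sat_agree φ hv (fun i hi => ?_)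
      by_cases hiX : i = X
      · subst hiX; simp
      · simp only [Function.update_of_ne hiX]
        exact hV i (by simp [Formula.setFV, hi, hiX])
  | .exS X φ, v, v', V, V', hv, hV => by
      simp only [Formula.Sat]
      refine exists_congr fun A => and_congr_right fun _ =>
        Formula.sat_agree φ hv (fun i hi => ?_)
      by_cases hiX : i = X
      · subst hiX; simp
      · simp only [Function.update_of_ne hiX]
        exact hV i (by simp [Formula.setFV, hi, hiX])

/-- Satisfaction of arithmetic formulas does not depend on the second-order domain. -/
theorem Formula.sat_arith {M : L1Struc} {D D' : Set (Set M.carrier)} :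
    ∀ (φ : Formula), φ.IsArithmetic → ∀ {v : ℕ → M.carrier} {V : ℕ → Set M.carrier},
      (Formula.Sat M D v V φ ↔ Formula.Sat M D' v V φ)
  | .eq _ _, _, _, _ => Iff.rfl
  | .lt _ _, _, _, _ => Iff.rfl
  | .mem _ _, _, _, _ => Iff.rfl
  | .not φ, h, v, V => by simp only [Formula.Sat]; rw [Formula.sat_arith φ h]
  | .and φ ψ, h, v, V => by
      simp only [Formula.Sat]; rw [Formula.sat_arith φ h.1, Formula.sat_arith ψ h.2]
  | .or φ ψ, h, v, V => by
      simp only [Formula.Sat]; rw [Formula.sat_arith φ h.1, Formula.sat_arith ψ h.2]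
  | .imp φ ψ, h, v, V => by
      simp only [Formula.Sat]; rw [Formula.sat_arith φ h.1, Formula.sat_arith ψ h.2]
  | .allN x φ, h, v, V => by
      simp only [Formula.Sat]
      exact forall_congr' fun a => Formula.sat_arith φ h
  | .exN x φ, h, v, V => by
      simp only [Formula.Sat]
      exact exists_congr fun a => Formula.sat_arith φ h

theorem IsDelta0.isArithmetic : ∀ {φ : Formula}, IsDelta0 φ → φ.IsArithmetic := by
  intro φ h
  induction h <;> simp [Formula.IsArithmetic, *]

theorem IsSigma01.isArithmetic : ∀ {φ : Formula}, IsSigma01 φ → φ.IsArithmetic := by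
  intro φ h
  induction h with
  | delta0 h => exact h.isArithmetic
  | exN x _ ih => exact ih

theorem Term.fv_finite : ∀ t : Term, t.fv.Finite
  | .var i => by simp [Term.fv]
  | .zero => by simp [Term.fv]
  | .one => by simp [Term.fv]
  | .add t s => by simpa [Term.fv] using (Term.fv_finite t).union (Term.fv_finite s)
  | .mul t s => by simpa [Term.fv] using (Term.fv_finite t).union (Term.fv_finite s)

theorem Formula.numFV_finite : ∀ φ : Formula, φ.numFV.Finite
  | .eq t s => (Term.fv_finite t).union (Term.fv_finite s)
  | .lt t s => (Term.fv_finite t).union (Term.fv_finite s)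
  | .mem t _ => Term.fv_finite t
  | .not φ => Formula.numFV_finite φ
  | .and φ ψ => (Formula.numFV_finite φ).union (Formula.numFV_finite ψ)
  | .or φ ψ => (Formula.numFV_finite φ).union (Formula.numFV_finite ψ)
  | .imp φ ψ => (Formula.numFV_finite φ).union (Formula.numFV_finite ψ)
  | .allN x φ => (Formula.numFV_finite φ).diff
  | .exN x φ => (Formula.numFV_finite φ).diff
  | .allS _ φ => Formula.numFV_finite φ
  | .exS _ φ => Formula.numFV_finite φ

theorem Formula.setFV_finite : ∀ φ : Formula, φ.setFV.Finite
  | .eq _ _ => Set.finite_empty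
  | .lt _ _ => Set.finite_empty
  | .mem _ X => Set.finite_singleton X
  | .not φ => Formula.setFV_finite φ
  | .and φ ψ => (Formula.setFV_finite φ).union (Formula.setFV_finite ψ)
  | .or φ ψ => (Formula.setFV_finite φ).union (Formula.setFV_finite ψ)
  | .imp φ ψ => (Formula.setFV_finite φ).union (Formula.setFV_finite ψ)
  | .allS X φ => (Formula.setFV_finite φ).diff
  | .exS X φ => (Formula.setFV_finite φ).diff
  | .allN _ φ => Formula.setFV_finite φ
  | .exN _ φ => Formula.setFV_finite φ

/-- Encoding of terms into `ℕ`. -/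
def Term.enc : Term → ℕ
  | .var i => Nat.pair 0 i
  | .zero => Nat.pair 1 0
  | .one => Nat.pair 2 0
  | .add t s => Nat.pair 3 (Nat.pair t.enc s.enc)
  | .mul t s => Nat.pair 4 (Nat.pair t.enc s.enc)

theorem Term.enc_inj : ∀ t s : Term, t.enc = s.enc → t = s := by
  intro t
  induction t <;> intro s <;> cases s <;>
    simp_all [Term.enc, Nat.pair_eq_pair] <;>
    exact fun h h' => ⟨by solve_by_elim, by solve_by_elim⟩

instance : Countable Term := ⟨Term.enc, Term.enc_inj⟩

/-- Encoding of formulas into `ℕ`. -/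
def Formula.enc : Formula → ℕ
  | .eq t s => Nat.pair 0 (Nat.pair t.enc s.enc)
  | .lt t s => Nat.pair 1 (Nat.pair t.enc s.enc)
  | .mem t X => Nat.pair 2 (Nat.pair t.enc X)
  | .not φ => Nat.pair 3 φ.enc
  | .and φ ψ => Nat.pair 4 (Nat.pair φ.enc ψ.enc)
  | .or φ ψ => Nat.pair 5 (Nat.pair φ.enc ψ.enc)
  | .imp φ ψ => Nat.pair 6 (Nat.pair φ.enc ψ.enc)
  | .allN x φ => Nat.pair 7 (Nat.pair x φ.enc)
  | .exN x φ => Nat.pair 8 (Nat.pair x φ.enc)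
  | .allS X φ => Nat.pair 9 (Nat.pair X φ.enc)
  | .exS X φ => Nat.pair 10 (Nat.pair X φ.enc)

theorem Formula.enc_inj : ∀ φ ψ : Formula, φ.enc = ψ.enc → φ = ψ := by
  intro φ
  induction φ <;> intro ψ <;> cases ψ <;>
    simp_all [Formula.enc, Nat.pair_eq_pair]
  all_goals aesop (add safe forward [Term.enc_inj])

instance : Countable Formula := ⟨Formula.enc, Formula.enc_inj⟩

end Aux
section GameAux

variable {P Q : Pi12Problem} {M : L1Struc} {C C' : List (Set M.carrier) → Prop}
  {f : ℕ → Set M.carrier} {g : ℕ → Prop × Set M.carrier}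

theorem mem_Mcl_self {M : L1Struc} {Ps : Set (Set M.carrier)} {X : Set M.carrier}
    (hX : X ∈ Ps) : X ∈ Mcl M Ps := by
  refine ⟨.mem (.var 0) 0, .not (.mem (.var 0) 0), 0, fun _ => M.zero, fun _ => X,
    .delta0 (.mem _ _), .delta0 (.not (.mem _ _)), fun i _ => hX, fun a => ?_, ?_⟩
  · simp [Formula.Sat, Term.val]
  · ext a; simp [Formula.Sat, Term.val]

theorem univ_mem_Mcl {M : L1Struc} {Ps : Set (Set M.carrier)} : Set.univ ∈ Mcl M Ps := by
  refine ⟨.eq .zero .zero, .not (.eq .zero .zero), 0, fun _ => M.zero, fun _ => Set.univ,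
    .delta0 (.eq _ _), .delta0 (.not (.eq _ _)), fun i hi => ?_, fun a => ?_, ?_⟩
  · exfalso; simpa [Formula.setFV, Term.fv] using hi
  · simp [Formula.Sat, Term.val]
  · ext a; simp [Formula.Sat, Term.val]

theorem d01closed_of_models {Γ : Set Formula} {M : L1Struc} {S : Set (Set M.carrier)}
    (hSne : S.Nonempty) (hM : Models2 M S Γ) (hExt : Delta01CA ⊆ Γ) : D01Closed M S := by
  rintro X ⟨φ₀, φ₁, x, v, V, hs0, hs1, hPs, hcom, rfl⟩
  obtain ⟨A₀, hA₀⟩ := hSne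
  classical
  set V' : ℕ → Set M.carrier := fun i => if V i ∈ S then V i else A₀ with hV'
  have hV'S : ∀ i, V' i ∈ S := by
    intro i; simp only [hV']; split
    · assumption
    · exact hA₀
  have hagree : ∀ i ∈ φ₀.setFV ∪ φ₁.setFV, V i = V' i := by
    intro i hi; simp only [hV', if_pos (hPs i hi)]
  obtain ⟨Xv, hXv⟩ := ((φ₀.setFV_finite.union φ₁.setFV_finite).infinite_compl).nonempty
  have hXv0 : Xv ∉ φ₀.setFV := fun h => hXv (Set.mem_union_left _ h)
  have hXv1 : Xv ∉ φ₁.setFV := fun h => hXv (Set.mem_union_right _ h)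
  have hF : Formula.imp (.allN x (Formula.iff φ₀ (.not φ₁)))
      (.exS Xv (.allN x (Formula.iff (.mem (.var x) Xv) φ₀))) ∈ Γ :=
    hExt ⟨φ₀, φ₁, x, Xv, hs0, hs1, hXv0, hXv1, rfl⟩
  have hsat := hM _ hF v V' hV'S
  have sat0 : ∀ a, (Formula.Sat M S (Function.update v x a) V' φ₀ ↔
      Formula.Sat M Set.univ (Function.update v x a) V φ₀) := fun a =>
    (Formula.sat_arith φ₀ hs0.isArithmetic).trans
      (Formula.sat_agree φ₀ (fun _ _ => rfl)
        (fun i hi => (hagree i (Set.mem_union_left _ hi)).symm))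
  have sat1 : ∀ a, (Formula.Sat M S (Function.update v x a) V' φ₁ ↔
      Formula.Sat M Set.univ (Function.update v x a) V φ₁) := fun a =>
    (Formula.sat_arith φ₁ hs1.isArithmetic).trans
      (Formula.sat_agree φ₁ (fun _ _ => rfl)
        (fun i hi => (hagree i (Set.mem_union_right _ hi)).symm))
  simp only [Formula.Sat, Formula.iff] at hsat
  obtain ⟨A, hAS, hA⟩ := hsat (fun a => by
    constructor
    · intro h0 h1
      exact ((hcom a).1 ((sat0 a).1 h0)) ((sat1 a).1 h1)
    · intro h1
      exact (sat0 a).2 ((hcom a).2 fun hh => h1 ((sat1 a).2 hh)))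
  have satA : ∀ a, (Formula.Sat M S (Function.update v x a) (Function.update V' Xv A) φ₀ ↔
      Formula.Sat M Set.univ (Function.update v x a) V φ₀) := fun a =>
    (Formula.sat_agree φ₀ (fun _ _ => rfl)
      (fun i hi => Function.update_of_ne (fun h : i = Xv => hXv0 (h ▸ hi)) _ _)).trans (sat0 a)
  have hA' : ∀ a, (a ∈ A ↔ Formula.Sat M Set.univ (Function.update v x a) V φ₀) := by
    intro a
    have h := hA a
    simp only [Formula.iff, Formula.Sat, Term.val, Function.update_self] at h
    exact ⟨fun ha => (satA a).1 (h.1 ha), fun hs => h.2 ((satA a).2 hs)⟩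
  have : A = {a | Formula.Sat M Set.univ (Function.update v x a) V φ₀} :=
    Set.ext fun a => hA' a
  exact this ▸ hAS

theorem mem_histL {n : ℕ} {X : Set M.carrier} :
    X ∈ histL M f n ↔ ∃ i, i ≤ n ∧ f i = X := by
  simp [histL, List.mem_map, List.mem_range, Nat.lt_succ_iff]

theorem Alive.succ_le {n : ℕ} (h : Alive P Q M C f g (n + 1)) : Alive P Q M C f g n := h.1

theorem Alive.of_le : ∀ {m n : ℕ}, m ≤ n → Alive P Q M C f g n → Alive P Q M C f g m := by
  intro m n h
  induction h with
  | refl => exact id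
  | step _ ih => exact fun h' => ih h'.1

theorem alive_condC : ∀ {n : ℕ}, Alive P Q M C f g n → C (histL M f n)
  | 0, h => h.2
  | _ + 1, h => h.2.2.2.2.2

theorem alive_congC : ∀ {n : ℕ}, (∀ k, k ≤ n → C' (histL M f k)) →
    Alive P Q M C f g n → Alive P Q M C' f g n
  | 0, hC, h => ⟨h.1, hC 0 le_rfl⟩
  | n + 1, hC, h =>
    ⟨alive_congC (fun k hk => hC k (hk.trans n.le_succ)) h.1,
      h.2.1, h.2.2.1, h.2.2.2.1, h.2.2.2.2.1, hC (n + 1) le_rfl⟩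

/-- Player 2's moves in a `Λ`-accordant run of `G^Γ` are always legal (Module B). -/
theorem legal_of_accords {Γ : Set Formula} (hExt : Delta01CA ⊆ Γ)
    {θ Λ : Formula} {P Q : Pi12Problem}
    (hwin : ∀ (M : L1Struc) (S : Set (Set M.carrier)), Countable M.carrier →
      Models2 M S Γ → D01Closed M S → ∀ f g,
        AccordsLambda θ Λ P Q M (CondS M S) f g → P2WinsRun P Q M (CondS M S) f g)
    (M : L1Struc) (hc : Countable M.carrier) (f : ℕ → Set M.carrier)
    (g : ℕ → Prop × Set M.carrier)
    (hacc : AccordsLambda θ Λ P Q M (CondG Γ M) f g) :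
    ∀ n, Alive P Q M (CondG Γ M) f g n → P2ContMove Q M f g n ∨ P2WinMove P M f g n := by
  intro n halive
  by_contra hno
  obtain ⟨T, hBT, hMT⟩ : CondG Γ M (histL M f n) := alive_condC halive
  have hTne : T.Nonempty := ⟨Set.univ, hBT univ_mem_Mcl⟩
  have hD : D01Closed M T := d01closed_of_models hTne hMT hExt
  have hsub : ∀ k, k ≤ n → CondS M T (histL M f k) := by
    intro k hk X hX
    obtain ⟨i, hi, rfl⟩ := mem_histL.1 hX
    exact hBT (mem_Mcl_self (mem_histL.2 ⟨i, hi.trans hk, rfl⟩))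
  have haliveS : ∀ m, m ≤ n → Alive P Q M (CondS M T) f g m := fun m hm =>
    alive_congC (fun k hk => hsub k (hk.trans hm)) (halive.of_le hm)
  have hdead : ∀ m, n + 1 ≤ m → ¬ Alive P Q M (CondS M T) f g m := by
    intro m hm
    induction hm with
    | refl =>
      intro h
      exact hno (Or.inl ⟨h.2.1, h.2.2.1, h.2.2.2.1⟩)
    | step _ ih => exact fun h => ih h.1
  have haccS : AccordsLambda θ Λ P Q M (CondS M T) f g := by
    intro m hm
    rcases le_or_gt m n with h | h
    · exact hacc m (halive.of_le h)
    · exact absurd hm (hdead m h)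
  exact hno ((hwin M T hc hMT hD f g haccS).1 n (haliveS n le_rfl))

end GameAux
section Ultra

variable (Mi : ℕ → L1Struc) (U : Ultrafilter ℕ)

theorem umem_not {U : Ultrafilter ℕ} {p : ℕ → Prop} :
    {n | ¬ p n} ∈ U ↔ ¬ ({n | p n} ∈ U) := by
  have h : {n | ¬ p n} = {n | p n}ᶜ := rfl
  rw [h, Ultrafilter.compl_mem_iff_notMem]

theorem umem_and {U : Ultrafilter ℕ} {p q : ℕ → Prop} :
    {n | p n ∧ q n} ∈ U ↔ ({n | p n} ∈ U ∧ {n | q n} ∈ U) := by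
  have h : {n | p n ∧ q n} = {n | p n} ∩ {n | q n} := rfl
  rw [h, ← Ultrafilter.mem_coe, Filter.inter_mem_iff, Ultrafilter.mem_coe,
    Ultrafilter.mem_coe]

theorem umem_or {U : Ultrafilter ℕ} {p q : ℕ → Prop} :
    {n | p n ∨ q n} ∈ U ↔ ({n | p n} ∈ U ∨ {n | q n} ∈ U) := by
  have h : {n | p n ∨ q n} = {n | p n} ∪ {n | q n} := rfl
  rw [h, Ultrafilter.union_mem_iff]

theorem umem_imp {U : Ultrafilter ℕ} {p q : ℕ → Prop} :
    {n | p n → q n} ∈ U ↔ ({n | p n} ∈ U → {n | q n} ∈ U) := by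
  have h : {n | p n → q n} = {n | ¬ p n ∨ q n} := Set.ext fun n => imp_iff_not_or
  rw [h, umem_or, umem_not]
  exact imp_iff_not_or.symm

theorem umem_mono {U : Ultrafilter ℕ} {p q : ℕ → Prop} (h : {n | p n} ∈ U)
    (hpq : ∀ n, p n → q n) : {n | q n} ∈ U :=
  Filter.mem_of_superset h hpq

theorem umem_elim {U : Ultrafilter ℕ} {p q : ℕ → Prop} (h1 : {n | p n} ∈ U)
    (h2 : {n | q n} ∈ U) : ∃ n, p n ∧ q n := by
  have := Filter.nonempty_of_mem (Ultrafilter.mem_coe.2 (umem_and.2 ⟨h1, h2⟩))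
  exact this

/-- The setoid of `U`-a.e. equality on the product of the carriers. -/
def uSetoid : Setoid (∀ n, (Mi n).carrier) where
  r x y := {n | x n = y n} ∈ U
  iseqv := by
    refine ⟨fun x => by
        have h : {n | x n = x n} = Set.univ := by ext n; simp
        rw [h]
        exact Ultrafilter.mem_coe.1 Filter.univ_mem,
      fun h => umem_mono h fun n hn => hn.symm,
      fun h₁ h₂ => ?_⟩
    have := umem_and.2 ⟨h₁, h₂⟩
    exact umem_mono this fun n hn => hn.1.trans hn.2

/-- The carrier of the ultraproduct. -/
def UCar : Type := Quotient (uSetoid Mi U)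

/-- The canonical map into the ultraproduct. -/
def umk (x : ∀ n, (Mi n).carrier) : UCar Mi U := Quotient.mk (uSetoid Mi U) x

theorem umk_eq {x y : ∀ n, (Mi n).carrier} :
    umk Mi U x = umk Mi U y ↔ {n | x n = y n} ∈ U :=
  ⟨fun h => Quotient.exact h, fun h => Quotient.sound h⟩

theorem umk_surj (c : UCar Mi U) : ∃ x, umk Mi U x = c := Quotient.exists_rep c

/-- The ultraproduct `L₁`-structure. -/
@[reducible] def ultraStr : L1Struc where
  carrier := UCar Mi U
  zero := umk Mi U fun n => (Mi n).zero
  one := umk Mi U fun n => (Mi n).one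
  add := Quotient.lift₂
    (fun x y => umk Mi U fun n => (Mi n).add (x n) (y n))
    (fun x y x' y' hx hy => Quotient.sound
      (umem_mono (umem_and.2 ⟨hx, hy⟩)
        (fun n hn => show (Mi n).add (x n) (y n) = (Mi n).add (x' n) (y' n) by
          rw [hn.1, hn.2])))
  mul := Quotient.lift₂
    (fun x y => umk Mi U fun n => (Mi n).mul (x n) (y n))
    (fun x y x' y' hx hy => Quotient.sound
      (umem_mono (umem_and.2 ⟨hx, hy⟩)
        (fun n hn => show (Mi n).mul (x n) (y n) = (Mi n).mul (x' n) (y' n) by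
          rw [hn.1, hn.2])))
  lt := Quotient.lift₂
    (fun x y => {n | (Mi n).lt (x n) (y n)} ∈ U)
    (fun x y x' y' hx hy => propext
      ⟨fun h => umem_mono (umem_and.2 ⟨h, umem_and.2 ⟨hx, hy⟩⟩)
          (fun n hn => show (Mi n).lt (x' n) (y' n) by
            have h1 : (Mi n).lt (x n) (y n) := hn.1
            rw [hn.2.1, hn.2.2] at h1
            exact h1),
        fun h => umem_mono (umem_and.2 ⟨h, umem_and.2 ⟨hx, hy⟩⟩)
          (fun n hn => show (Mi n).lt (x n) (y n) by
            have h1 : (Mi n).lt (x' n) (y' n) := hn.1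
            rw [← hn.2.1, ← hn.2.2] at h1
            exact h1)⟩)

theorem add_umk (x y : ∀ n, (Mi n).carrier) :
    (ultraStr Mi U).add (umk Mi U x) (umk Mi U y) =
      umk Mi U (fun n => (Mi n).add (x n) (y n)) := rfl

theorem mul_umk (x y : ∀ n, (Mi n).carrier) :
    (ultraStr Mi U).mul (umk Mi U x) (umk Mi U y) =
      umk Mi U (fun n => (Mi n).mul (x n) (y n)) := rfl

theorem lt_umk (x y : ∀ n, (Mi n).carrier) :
    (ultraStr Mi U).lt (umk Mi U x) (umk Mi U y) ↔
      {n | (Mi n).lt (x n) (y n)} ∈ U := Iff.rfl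

theorem zero_umk : (ultraStr Mi U).zero = umk Mi U (fun n => (Mi n).zero) := rfl

/-- An internal set of the ultraproduct. -/
def setU (A : ∀ n, Set (Mi n).carrier) : Set (UCar Mi U) :=
  {c | Quotient.lift (fun x => {n | x n ∈ A n} ∈ U)
    (fun x y hxy => propext
      ⟨fun h => umem_mono (umem_and.2 ⟨h, hxy⟩)
          (fun n hn => show y n ∈ A n by
            have h1 : x n ∈ A n := hn.1
            rw [hn.2] at h1
            exact h1),
        fun h => umem_mono (umem_and.2 ⟨h, hxy⟩)
          (fun n hn => show x n ∈ A n by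
            have h1 : y n ∈ A n := hn.1
            rw [← hn.2] at h1
            exact h1)⟩) c}

theorem mem_setU {A : ∀ n, Set (Mi n).carrier} {x : ∀ n, (Mi n).carrier} :
    umk Mi U x ∈ setU Mi U A ↔ {n | x n ∈ A n} ∈ U := Iff.rfl

theorem setU_congr {A B : ∀ n, Set (Mi n).carrier} (h : {n | A n = B n} ∈ U) :
    setU Mi U A = setU Mi U B := by
  ext c
  obtain ⟨x, rfl⟩ := umk_surj Mi U c
  rw [mem_setU, mem_setU]
  constructor
  · intro h'
    refine umem_mono (umem_and.2 ⟨h', h⟩) fun n hn => show x n ∈ B n by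
      have h1 : x n ∈ A n := hn.1
      rw [hn.2] at h1
      exact h1
  · intro h'
    refine umem_mono (umem_and.2 ⟨h', h⟩) fun n hn => show x n ∈ A n by
      have h1 : x n ∈ B n := hn.1
      rw [← hn.2] at h1
      exact h1

/-- The internal second-order domain determined by the factors' domains `Ti`. -/
def SU (Ti : ∀ n, Set (Set (Mi n).carrier)) : Set (Set (UCar Mi U)) :=
  {B | ∃ A, (∀ n, A n ∈ Ti n) ∧ B = setU Mi U A}

theorem val_umk (t : Term) (v : ℕ → ∀ n, (Mi n).carrier) :
    t.val (ultraStr Mi U) (fun i => umk Mi U (v i)) =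
      umk Mi U (fun n => t.val (Mi n) (fun i => v i n)) := by
  induction t with
  | var i => rfl
  | zero => rfl
  | one => rfl
  | add t s iht ihs => simp only [Term.val, iht, ihs, add_umk]; rfl
  | mul t s iht ihs => simp only [Term.val, iht, ihs, mul_umk]; rfl

theorem update_comp {β : Type*} {γ : Type*} (v : ℕ → β) (x : ℕ) (a : β) (G : β → γ) :
    Function.update (fun i => G (v i)) x (G a) = fun i => G (Function.update v x a i) := by
  funext i
  rcases eq_or_ne i x with rfl | h
  · simp
  · simp [Function.update_of_ne h]

theorem update_apply {β : ℕ → Type*} (v : ℕ → ∀ n, β n) (x : ℕ) (a : ∀ n, β n) (n : ℕ) :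
    (fun i => Function.update v x a i n) = Function.update (fun i => v i n) x (a n) := by
  funext i
  rcases eq_or_ne i x with rfl | h
  · simp
  · simp [Function.update_of_ne h]

/-- **Łoś's theorem** for the deep embedding. -/
theorem los (Ti : ∀ n, Set (Set (Mi n).carrier)) (hTne : ∀ n, (Ti n).Nonempty) :
    ∀ (φ : Formula) (v : ℕ → ∀ n, (Mi n).carrier) (V : ℕ → ∀ n, Set (Mi n).carrier),
      (Formula.Sat (ultraStr Mi U) (SU Mi U Ti) (fun i => umk Mi U (v i))
          (fun i => setU Mi U (V i)) φ ↔
        {n | Formula.Sat (Mi n) (Ti n) (fun i => v i n) (fun i => V i n) φ} ∈ U)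
  | .eq t s, v, V => by
      simp only [Formula.Sat, val_umk]
      exact umk_eq Mi U
  | .lt t s, v, V => by
      simp only [Formula.Sat, val_umk]
      exact lt_umk Mi U _ _
  | .mem t X, v, V => by
      simp only [Formula.Sat, val_umk]
      exact mem_setU Mi U
  | .not φ, v, V => by
      simp only [Formula.Sat]
      rw [los Ti hTne φ v V]
      exact umem_not.symm
  | .and φ ψ, v, V => by
      simp only [Formula.Sat]
      rw [los Ti hTne φ v V, los Ti hTne ψ v V]
      exact umem_and.symm
  | .or φ ψ, v, V => by
      simp only [Formula.Sat]
      rw [los Ti hTne φ v V, los Ti hTne ψ v V]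
      exact umem_or.symm
  | .imp φ ψ, v, V => by
      simp only [Formula.Sat]
      rw [los Ti hTne φ v V, los Ti hTne ψ v V]
      exact umem_imp.symm
  | .allN x φ, v, V => by
      simp only [Formula.Sat]
      constructor
      · intro hL
        by_contra hU
        have hU' : {n | ∃ a, ¬ Formula.Sat (Mi n) (Ti n)
            (Function.update (fun i => v i n) x a) (fun i => V i n) φ} ∈ U :=
          umem_mono (umem_not.2 hU) fun n hn => not_forall.1 hn
        classical
        set w : ∀ n, (Mi n).carrier := fun n =>
          if h : ∃ a, ¬ Formula.Sat (Mi n) (Ti n)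
              (Function.update (fun i => v i n) x a) (fun i => V i n) φ
          then h.choose else (Mi n).zero with hw
        have h1 := hL (umk Mi U w)
        rw [update_comp v x w (umk Mi U),
          los Ti hTne φ (Function.update v x w) V] at h1
        simp only [update_apply] at h1
        obtain ⟨n, hn1, hn2⟩ := umem_elim h1 hU'
        have hwn : w n = hn2.choose := by simp only [hw, dif_pos hn2]
        rw [hwn] at hn1
        exact hn2.choose_spec hn1
      · intro hU a
        obtain ⟨a, rfl⟩ := umk_surj Mi U a
        rw [update_comp v x a (umk Mi U),
          los Ti hTne φ (Function.update v x a) V]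
        refine umem_mono hU fun n hn => ?_
        rw [update_apply]
        exact hn (a n)
  | .exN x φ, v, V => by
      simp only [Formula.Sat]
      constructor
      · rintro ⟨a, ha⟩
        obtain ⟨a, rfl⟩ := umk_surj Mi U a
        rw [update_comp v x a (umk Mi U),
          los Ti hTne φ (Function.update v x a) V] at ha
        simp only [update_apply] at ha
        exact umem_mono ha fun n hn => ⟨a n, hn⟩
      · intro hU
        classical
        set w : ∀ n, (Mi n).carrier := fun n =>
          if h : ∃ a, Formula.Sat (Mi n) (Ti n)
              (Function.update (fun i => v i n) x a) (fun i => V i n) φ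
          then h.choose else (Mi n).zero with hw
        refine ⟨umk Mi U w, ?_⟩
        rw [update_comp v x w (umk Mi U),
          los Ti hTne φ (Function.update v x w) V]
        simp only [update_apply]
        refine umem_mono hU fun n hn => ?_
        have h : ∃ a, Formula.Sat (Mi n) (Ti n)
            (Function.update (fun i => v i n) x a) (fun i => V i n) φ := hn
        have hwn : w n = h.choose := by simp only [hw, dif_pos h]
        rw [hwn]
        exact h.choose_spec
  | .allS X φ, v, V => by
      simp only [Formula.Sat]
      constructor
      · intro hL
        by_contra hU
        have hU' : {n | ∃ A ∈ Ti n, ¬ Formula.Sat (Mi n) (Ti n)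
            (fun i => v i n) (Function.update (fun i => V i n) X A) φ} ∈ U := by
          refine umem_mono (umem_not.2 hU) fun n hn => ?_
          obtain ⟨A, hA⟩ := not_forall.1 hn
          obtain ⟨hA1, hA2⟩ := _root_.not_imp.1 hA
          exact ⟨A, hA1, hA2⟩
        classical
        set w : ∀ n, Set (Mi n).carrier := fun n =>
          if h : ∃ A ∈ Ti n, ¬ Formula.Sat (Mi n) (Ti n)
              (fun i => v i n) (Function.update (fun i => V i n) X A) φ
          then h.choose else (hTne n).choose with hw
        have hwT : ∀ n, w n ∈ Ti n := by
          intro n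
          rw [hw]
          simp only []
          split
          · next h => exact h.choose_spec.1
          · exact (hTne n).choose_spec
        have h1 := hL (setU Mi U w) ⟨w, hwT, rfl⟩
        rw [update_comp V X w (setU Mi U),
          los Ti hTne φ v (Function.update V X w)] at h1
        simp only [update_apply] at h1
        obtain ⟨n, hn1, hn2⟩ := umem_elim h1 hU'
        have hwn : ¬ Formula.Sat (Mi n) (Ti n) (fun i => v i n)
            (Function.update (fun i => V i n) X (w n)) φ := by
          rw [hw]
          simpa only [dif_pos hn2] using hn2.choose_spec.2
        exact hwn hn1
      · intro hU B hB
        obtain ⟨A, hAT, rfl⟩ := hB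
        rw [update_comp V X A (setU Mi U),
          los Ti hTne φ v (Function.update V X A)]
        refine umem_mono hU fun n hn => ?_
        rw [update_apply]
        exact hn (A n) (hAT n)
  | .exS X φ, v, V => by
      simp only [Formula.Sat]
      constructor
      · rintro ⟨B, hB, hsat⟩
        obtain ⟨A, hAT, rfl⟩ := hB
        rw [update_comp V X A (setU Mi U),
          los Ti hTne φ v (Function.update V X A)] at hsat
        simp only [update_apply] at hsat
        exact umem_mono hsat fun n hn => ⟨A n, hAT n, hn⟩
      · intro hU
        classical
        set w : ∀ n, Set (Mi n).carrier := fun n =>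
          if h : ∃ A ∈ Ti n, Formula.Sat (Mi n) (Ti n)
              (fun i => v i n) (Function.update (fun i => V i n) X A) φ
          then h.choose else (hTne n).choose with hw
        have hwT : ∀ n, w n ∈ Ti n := by
          intro n
          rw [hw]
          simp only []
          split
          · next h => exact h.choose_spec.1
          · exact (hTne n).choose_spec
        refine ⟨setU Mi U w, ⟨w, hwT, rfl⟩, ?_⟩
        rw [update_comp V X w (setU Mi U),
          los Ti hTne φ v (Function.update V X w)]
        simp only [update_apply]
        refine umem_mono hU fun n hn => ?_
        obtain ⟨A, hA, hsA⟩ := hn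
        have h : ∃ A ∈ Ti n, Formula.Sat (Mi n) (Ti n)
            (fun i => v i n) (Function.update (fun i => V i n) X A) φ := ⟨A, hA, hsA⟩
        rw [hw]
        simpa only [dif_pos h] using h.choose_spec.2

end Ultra
section Ultra2

variable (Mi : ℕ → L1Struc) (U : Ultrafilter ℕ) (Ti : ∀ n, Set (Set (Mi n).carrier))

theorem models2_ultra (hTne : ∀ n, (Ti n).Nonempty) {Γ : Set Formula}
    (h : ∀ n, Models2 (Mi n) (Ti n) Γ) : Models2 (ultraStr Mi U) (SU Mi U Ti) Γ := by
  intro φ hφ v V hV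
  choose A hA hVA using hV
  choose x hx using fun i => umk_surj Mi U (v i)
  have hveq : v = fun i => umk Mi U (x i) := funext fun i => (hx i).symm
  have hVeq : V = fun i => setU Mi U (A i) := funext fun i => hVA i
  rw [hveq, hVeq, los Mi U Ti hTne φ x A]
  exact umem_mono (Ultrafilter.mem_coe.1 Filter.univ_mem)
    fun n _ => h n φ hφ _ _ (fun i => hA i n)

theorem satIdx_ultra (hTne : ∀ n, (Ti n).Nonempty) {θ : Formula} (hθ : θ.IsArithmetic)
    (i m : ∀ n, (Mi n).carrier) (X : ∀ n, Set (Mi n).carrier) :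
    satIdx θ (ultraStr Mi U) (umk Mi U i) (umk Mi U m) (setU Mi U X) ↔
      {n | satIdx θ (Mi n) (i n) (m n) (X n)} ∈ U := by
  unfold satIdx
  rw [Formula.sat_arith θ hθ (D' := SU Mi U Ti)]
  have hv : (fun k => if k = 0 then umk Mi U i else if k = 1 then umk Mi U m
      else (ultraStr Mi U).zero) = fun k => umk Mi U (fun n =>
        if k = 0 then i n else if k = 1 then m n else (Mi n).zero) := by
    funext k
    rcases eq_or_ne k 0 with rfl | h0
    · simp
    · rcases eq_or_ne k 1 with rfl | h1
      · simp [h0]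
      · simp only [if_neg h0, if_neg h1]
  rw [hv]
  have hV : (fun _ : ℕ => setU Mi U X) = fun k => setU Mi U ((fun _ => X) k) := rfl
  rw [hV, los Mi U Ti hTne θ _ (fun _ => X)]
  have hset : {n | Formula.Sat (Mi n) (Ti n)
      (fun k => (fun n => if k = 0 then i n else if k = 1 then m n else (Mi n).zero) n)
      (fun _ => X n) θ} = {n | satIdx θ (Mi n) (i n) (m n) (X n)} :=
    Set.ext fun n => Formula.sat_arith θ hθ
  rw [hset]
  rfl

theorem isPhi_ultra (hTne : ∀ n, (Ti n).Nonempty) {θ : Formula} (hθ : θ.IsArithmetic)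
    {e : ∀ n, (Mi n).carrier} {X Z : ∀ n, Set (Mi n).carrier}
    (h : {n | IsPhi θ (Mi n) (e n) (X n) (Z n)} ∈ U) :
    IsPhi θ (ultraStr Mi U) (umk Mi U e) (setU Mi U X) (setU Mi U Z) := by
  classical
  have hsel : ∀ n, ∃ ij : (Mi n).carrier × (Mi n).carrier,
      IsPhi θ (Mi n) (e n) (X n) (Z n) →
        cantorPairRel (Mi n) ij.1 ij.2 (e n) ∧
        (∀ m, satIdx θ (Mi n) ij.1 m (X n) ↔ ¬ satIdx θ (Mi n) ij.2 m (X n)) ∧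
        (∀ m, m ∈ Z n ↔ satIdx θ (Mi n) ij.1 m (X n)) := by
    intro n
    by_cases h' : IsPhi θ (Mi n) (e n) (X n) (Z n)
    · obtain ⟨a, b, h1, h2, h3⟩ := h'
      exact ⟨(a, b), fun _ => ⟨h1, h2, h3⟩⟩
    · exact ⟨((Mi n).zero, (Mi n).zero), fun hc => absurd hc h'⟩
  choose ij hij using hsel
  refine ⟨umk Mi U (fun n => (ij n).1), umk Mi U (fun n => (ij n).2), ?_, ?_, ?_⟩
  · exact (umk_eq Mi U).2 (umem_mono h fun n hn => (hij n hn).1)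
  · intro c
    obtain ⟨m, rfl⟩ := umk_surj Mi U c
    rw [satIdx_ultra Mi U Ti hTne hθ, satIdx_ultra Mi U Ti hTne hθ]
    constructor
    · intro hI hJ
      obtain ⟨n, hn1, hn2⟩ := umem_elim (umem_and.2 ⟨hI, hJ⟩) h
      exact ((hij n hn2).2.1 (m n)).1 hn1.1 hn1.2
    · intro hnJ
      refine umem_mono (umem_and.2 ⟨umem_not.2 hnJ, h⟩) fun n hn => ?_
      exact ((hij n hn.2).2.1 (m n)).2 hn.1
  · intro c
    obtain ⟨m, rfl⟩ := umk_surj Mi U c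
    rw [mem_setU, satIdx_ultra Mi U Ti hTne hθ]
    constructor
    · intro hZ
      refine umem_mono (umem_and.2 ⟨hZ, h⟩) fun n hn => ?_
      exact ((hij n hn.2).2.2 (m n)).1 hn.1
    · intro hI
      refine umem_mono (umem_and.2 ⟨hI, h⟩) fun n hn => ?_
      exact ((hij n hn.2).2.2 (m n)).2 hn.1

theorem numM_umk (m : ℕ) :
    numM (ultraStr Mi U) m = umk Mi U (fun n => numM (Mi n) m) := by
  induction m with
  | zero => rfl
  | succ m ih =>
    show (ultraStr Mi U).add (numM (ultraStr Mi U) m) (ultraStr Mi U).one = _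
    rw [ih]
    exact add_umk Mi U _ _

theorem joinM_setU (A B : ∀ n, Set (Mi n).carrier) :
    joinM (ultraStr Mi U) (setU Mi U A) (setU Mi U B) =
      setU Mi U (fun n => joinM (Mi n) (A n) (B n)) := by
  classical
  ext c
  obtain ⟨x, rfl⟩ := umk_surj Mi U c
  constructor
  · rintro (⟨a, ha, hx⟩ | ⟨a, ha, hx⟩) <;> obtain ⟨y, rfl⟩ := umk_surj Mi U a
    · have hx' := (umk_eq Mi U).1 hx
      rw [mem_setU]
      refine umem_mono (umem_and.2 ⟨hx', ha⟩) fun n hn => ?_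
      exact Or.inl ⟨y n, hn.2, hn.1⟩
    · have hx' := (umk_eq Mi U).1 hx
      rw [mem_setU]
      refine umem_mono (umem_and.2 ⟨hx', ha⟩) fun n hn => ?_
      exact Or.inr ⟨y n, hn.2, hn.1⟩
  · intro hx
    rw [mem_setU] at hx
    have : {n | (∃ a ∈ A n, x n = (Mi n).add a a) ∨
        (∃ a ∈ B n, x n = (Mi n).add ((Mi n).add a a) (Mi n).one)} ∈ U := hx
    rcases umem_or.1 this with hl | hr
    · set y : ∀ n, (Mi n).carrier := fun n =>
        if h' : ∃ a ∈ A n, x n = (Mi n).add a a then h'.choose else (Mi n).zero with hy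
      refine Or.inl ⟨umk Mi U y, ?_, ?_⟩
      · rw [mem_setU]
        refine umem_mono hl fun n hn => ?_
        have := hn.choose_spec.1
        simpa only [hy, dif_pos hn] using this
      · refine (umk_eq Mi U).2 (umem_mono hl fun n hn => ?_)
        have := hn.choose_spec.2
        simpa only [hy, dif_pos hn] using this
    · set y : ∀ n, (Mi n).carrier := fun n =>
        if h' : ∃ a ∈ B n, x n = (Mi n).add ((Mi n).add a a) (Mi n).one
        then h'.choose else (Mi n).zero with hy
      refine Or.inr ⟨umk Mi U y, ?_, ?_⟩
      · rw [mem_setU]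
        refine umem_mono hr fun n hn => ?_
        have := hn.choose_spec.1
        simpa only [hy, dif_pos hn] using this
      · refine (umk_eq Mi U).2 (umem_mono hr fun n hn => ?_)
        have := hn.choose_spec.2
        simpa only [hy, dif_pos hn] using this

theorem joinList_foldl_setU (L : List (∀ n, Set (Mi n).carrier))
    (X : ∀ n, Set (Mi n).carrier) :
    List.foldl (joinM (ultraStr Mi U)) (setU Mi U X) (L.map (setU Mi U)) =
      setU Mi U (fun n => List.foldl (joinM (Mi n)) (X n) (L.map (· n))) := by
  induction L generalizing X with
  | nil => rfl
  | cons Y rest ih =>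
    simp only [List.map_cons, List.foldl_cons]
    rw [joinM_setU, ih]

theorem joinList_setU (L : List (∀ n, Set (Mi n).carrier)) (hL : L ≠ []) :
    joinList (ultraStr Mi U) (L.map (setU Mi U)) =
      setU Mi U (fun n => joinList (Mi n) (L.map (· n))) := by
  cases L with
  | nil => exact absurd rfl hL
  | cons X rest =>
    simp only [List.map_cons, joinList]
    exact joinList_foldl_setU Mi U rest X

end Ultra2
section Hull

variable (M : L1Struc) (S : Set (Set M.carrier)) (hSne : S.Nonempty)
  (N0 : Set M.carrier) (F0 : Set (Set M.carrier))

open Classical in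
/-- Skolem witness for a number-existential. -/
noncomputable def wN (φ : Formula) (x : ℕ) (v : ℕ → M.carrier) (V : ℕ → Set M.carrier) :
    M.carrier :=
  if h : ∃ a, Formula.Sat M S (Function.update v x a) V φ then h.choose else M.zero

theorem wN_spec {φ : Formula} {x : ℕ} {v : ℕ → M.carrier} {V : ℕ → Set M.carrier}
    (h : ∃ a, Formula.Sat M S (Function.update v x a) V φ) :
    Formula.Sat M S (Function.update v x (wN M S φ x v V)) V φ := by
  rw [wN, dif_pos h]
  exact h.choose_spec

open Classical in
/-- Skolem witness for a set-existential. -/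
noncomputable def wS (φ : Formula) (X : ℕ) (v : ℕ → M.carrier) (V : ℕ → Set M.carrier) :
    Set M.carrier :=
  if h : ∃ A ∈ S, Formula.Sat M S v (Function.update V X A) φ then h.choose
  else hSne.choose

theorem wS_mem (φ : Formula) (X : ℕ) (v : ℕ → M.carrier) (V : ℕ → Set M.carrier) :
    wS M S hSne φ X v V ∈ S := by
  rw [wS]
  split
  · next h => exact h.choose_spec.1
  · exact hSne.choose_spec

theorem wS_spec {φ : Formula} {X : ℕ} {v : ℕ → M.carrier} {V : ℕ → Set M.carrier}
    (h : ∃ A ∈ S, Formula.Sat M S v (Function.update V X A) φ) :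
    Formula.Sat M S v (Function.update V X (wS M S hSne φ X v V)) φ := by
  rw [wS, dif_pos h]
  exact h.choose_spec.2

noncomputable def vOf (l : List (ℕ × M.carrier)) : ℕ → M.carrier :=
  fun i => (l.lookup i).getD M.zero

noncomputable def VOf (L : List (ℕ × Set M.carrier)) : ℕ → Set M.carrier :=
  fun i => (L.lookup i).getD hSne.choose

theorem lookup_map {β : Type*} (f : ℕ → β) :
    ∀ (l : List ℕ) (i : ℕ), i ∈ l → (l.map (fun j => (j, f j))).lookup i = some (f i) := by
  intro l
  induction l with
  | nil => intro i hi; simp at hi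
  | cons j t ih =>
    intro i hi
    by_cases h : i = j
    · subst h
      simp [List.lookup]
    · have hb : (i == j) = false := beq_eq_false_iff_ne.2 h
      simp only [List.map_cons, List.lookup, hb]
      exact ih i (by
        rcases List.mem_cons.1 hi with rfl | h'
        · exact absurd rfl h
        · exact h')

/-- One Skolem-closure step. -/
noncomputable def hullStep (p : Set M.carrier × Set (Set M.carrier)) :
    Set M.carrier × Set (Set M.carrier) :=
  (p.1 ∪ {M.zero, M.one} ∪ Set.image2 M.add p.1 p.1 ∪ Set.image2 M.mul p.1 p.1 ∪
    Set.range (fun q : Formula × ℕ × List (ℕ × ↥p.1) × List (ℕ × ↥p.2) =>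
      wN M S q.1 q.2.1 (vOf M (q.2.2.1.map (fun r => (r.1, (r.2 : M.carrier)))))
        (VOf M S hSne (q.2.2.2.map (fun r => (r.1, (r.2 : Set M.carrier)))))),
   p.2 ∪ Set.range (fun q : Formula × ℕ × List (ℕ × ↥p.1) × List (ℕ × ↥p.2) =>
      wS M S hSne q.1 q.2.1 (vOf M (q.2.2.1.map (fun r => (r.1, (r.2 : M.carrier)))))
        (VOf M S hSne (q.2.2.2.map (fun r => (r.1, (r.2 : Set M.carrier)))))))

noncomputable def hullP : ℕ → Set M.carrier × Set (Set M.carrier)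
  | 0 => (N0 ∪ {M.zero, M.one}, F0 ∪ {hSne.choose})
  | k + 1 => hullStep M S hSne (hullP k)

/-- The first-order part of the hull. -/
def NH : Set M.carrier := ⋃ k, (hullP M S hSne N0 F0 k).1

/-- The family of parameter sets of the hull. -/
def FH : Set (Set M.carrier) := ⋃ k, (hullP M S hSne N0 F0 k).2

theorem hullP_mono_succ (k : ℕ) :
    (hullP M S hSne N0 F0 k).1 ⊆ (hullP M S hSne N0 F0 (k + 1)).1 ∧
    (hullP M S hSne N0 F0 k).2 ⊆ (hullP M S hSne N0 F0 (k + 1)).2 := by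
  constructor
  · intro a ha
    exact Or.inl (Or.inl (Or.inl (Or.inl ha)))
  · intro A hA
    exact Or.inl hA

theorem hullP_mono {k k' : ℕ} (h : k ≤ k') :
    (hullP M S hSne N0 F0 k).1 ⊆ (hullP M S hSne N0 F0 k').1 ∧
    (hullP M S hSne N0 F0 k).2 ⊆ (hullP M S hSne N0 F0 k').2 := by
  induction h with
  | refl => exact ⟨subset_rfl, subset_rfl⟩
  | step h ih =>
    exact ⟨ih.1.trans (hullP_mono_succ M S hSne N0 F0 _).1,
      ih.2.trans (hullP_mono_succ M S hSne N0 F0 _).2⟩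

theorem zero_mem_stage (k : ℕ) : M.zero ∈ (hullP M S hSne N0 F0 k).1 :=
  (hullP_mono M S hSne N0 F0 (Nat.zero_le k)).1 (Or.inr (Or.inl rfl))

theorem one_mem_stage (k : ℕ) : M.one ∈ (hullP M S hSne N0 F0 k).1 :=
  (hullP_mono M S hSne N0 F0 (Nat.zero_le k)).1 (Or.inr (Or.inr rfl))

theorem choice_mem_stage (k : ℕ) : hSne.choose ∈ (hullP M S hSne N0 F0 k).2 :=
  (hullP_mono M S hSne N0 F0 (Nat.zero_le k)).2 (Or.inr rfl)

theorem zero_mem_NH : M.zero ∈ NH M S hSne N0 F0 :=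
  Set.mem_iUnion.2 ⟨0, Or.inr (Or.inl rfl)⟩

theorem one_mem_NH : M.one ∈ NH M S hSne N0 F0 :=
  Set.mem_iUnion.2 ⟨0, Or.inr (Or.inr rfl)⟩

theorem add_mem_NH {a b : M.carrier} (ha : a ∈ NH M S hSne N0 F0)
    (hb : b ∈ NH M S hSne N0 F0) : M.add a b ∈ NH M S hSne N0 F0 := by
  obtain ⟨k1, hk1⟩ := Set.mem_iUnion.1 ha
  obtain ⟨k2, hk2⟩ := Set.mem_iUnion.1 hb
  refine Set.mem_iUnion.2 ⟨max k1 k2 + 1, ?_⟩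
  exact Or.inl (Or.inl (Or.inr (Set.mem_image2_of_mem
    ((hullP_mono M S hSne N0 F0 (le_max_left k1 k2)).1 hk1)
    ((hullP_mono M S hSne N0 F0 (le_max_right k1 k2)).1 hk2))))

theorem mul_mem_NH {a b : M.carrier} (ha : a ∈ NH M S hSne N0 F0)
    (hb : b ∈ NH M S hSne N0 F0) : M.mul a b ∈ NH M S hSne N0 F0 := by
  obtain ⟨k1, hk1⟩ := Set.mem_iUnion.1 ha
  obtain ⟨k2, hk2⟩ := Set.mem_iUnion.1 hb
  refine Set.mem_iUnion.2 ⟨max k1 k2 + 1, ?_⟩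
  exact Or.inl (Or.inr (Set.mem_image2_of_mem
    ((hullP_mono M S hSne N0 F0 (le_max_left k1 k2)).1 hk1)
    ((hullP_mono M S hSne N0 F0 (le_max_right k1 k2)).1 hk2)))

theorem NH_countable (hN0 : N0.Countable) (hF0 : F0.Countable) :
    (NH M S hSne N0 F0).Countable ∧ (FH M S hSne N0 F0).Countable := by
  have hstage : ∀ k, (hullP M S hSne N0 F0 k).1.Countable ∧
      (hullP M S hSne N0 F0 k).2.Countable := by
    intro k
    induction k with
    | zero =>
      exact ⟨hN0.union ((Set.countable_singleton _).union (Set.countable_singleton _)),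
        hF0.union (Set.countable_singleton _)⟩
    | succ k ih =>
      have hc1 := ih.1
      have hc2 := ih.2
      haveI := hc1.to_subtype
      haveI := hc2.to_subtype
      constructor
      · exact ((((hc1.union ((Set.countable_singleton _).union
          (Set.countable_singleton _))).union
          (hc1.image2 hc1 _)).union (hc1.image2 hc1 _)).union (Set.countable_range _))
      · exact hc2.union (Set.countable_range _)
  exact ⟨Set.countable_iUnion fun k => (hstage k).1,
    Set.countable_iUnion fun k => (hstage k).2⟩

/-- The hull `L₁`-structure. -/
@[reducible] noncomputable def hullStr : L1Struc where
  carrier := ↥(NH M S hSne N0 F0)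
  zero := ⟨M.zero, zero_mem_NH M S hSne N0 F0⟩
  one := ⟨M.one, one_mem_NH M S hSne N0 F0⟩
  add a b := ⟨M.add a b, add_mem_NH M S hSne N0 F0 a.2 b.2⟩
  mul a b := ⟨M.mul a b, mul_mem_NH M S hSne N0 F0 a.2 b.2⟩
  lt a b := M.lt a b

/-- Restriction of a set to the hull. -/
def resSet (A : Set M.carrier) : Set (↥(NH M S hSne N0 F0)) := {x | (x : M.carrier) ∈ A}

/-- The second-order part of the hull structure. -/
def SH : Set (Set (↥(NH M S hSne N0 F0))) :=
  {B | ∃ A, A ∈ FH M S hSne N0 F0 ∧ A ∈ S ∧ B = resSet M S hSne N0 F0 A}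

theorem val_hull (t : Term) (v : ℕ → ↥(NH M S hSne N0 F0)) :
    Subtype.val (Term.val (hullStr M S hSne N0 F0) v t) =
      Term.val M (fun i => (v i : M.carrier)) t := by
  induction t with
  | var i => rfl
  | zero => rfl
  | one => rfl
  | add t s iht ihs =>
    show M.add (Subtype.val (Term.val (hullStr M S hSne N0 F0) v t))
        (Subtype.val (Term.val (hullStr M S hSne N0 F0) v s)) =
      M.add (Term.val M (fun i => (v i : M.carrier)) t)
        (Term.val M (fun i => (v i : M.carrier)) s)
    rw [iht, ihs]
  | mul t s iht ihs =>
    show M.mul (Subtype.val (Term.val (hullStr M S hSne N0 F0) v t))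
        (Subtype.val (Term.val (hullStr M S hSne N0 F0) v s)) =
      M.mul (Term.val M (fun i => (v i : M.carrier)) t)
        (Term.val M (fun i => (v i : M.carrier)) s)
    rw [iht, ihs]

theorem exN_witness (φ : Formula) (x : ℕ) (v : ℕ → ↥(NH M S hSne N0 F0))
    {V : ℕ → Set M.carrier} (hV : ∀ i, V i ∈ FH M S hSne N0 F0)
    (h : ∃ a, Formula.Sat M S (Function.update (fun i => (v i : M.carrier)) x a) V φ) :
    ∃ w : ↥(NH M S hSne N0 F0),
      Formula.Sat M S (Function.update (fun i => (v i : M.carrier)) x (w : M.carrier)) V φ := by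
  classical
  -- find a common stage for the finitely many free variables
  choose kv hkv using fun i => Set.mem_iUnion.1 (v i).2
  choose kV hkV using fun i => Set.mem_iUnion.1 (hV i)
  set In : Finset ℕ := (φ.numFV_finite).toFinset with hIn
  set IS : Finset ℕ := (φ.setFV_finite).toFinset with hIS
  set k : ℕ := max (In.sup kv) (IS.sup kV) with hk
  have hvk : ∀ i ∈ In, ((v i : M.carrier)) ∈ (hullP M S hSne N0 F0 k).1 := fun i hi =>
    (hullP_mono M S hSne N0 F0 ((Finset.le_sup hi).trans (le_max_left _ _))).1 (hkv i)
  have hVk : ∀ i ∈ IS, V i ∈ (hullP M S hSne N0 F0 k).2 := fun i hi =>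
    (hullP_mono M S hSne N0 F0 ((Finset.le_sup hi).trans (le_max_right _ _))).2 (hkV i)
  set valN : ℕ → ↥(hullP M S hSne N0 F0 k).1 := fun i =>
    if h' : ((v i : M.carrier)) ∈ (hullP M S hSne N0 F0 k).1 then ⟨_, h'⟩
    else ⟨M.zero, zero_mem_stage M S hSne N0 F0 k⟩ with hvalN
  set valF : ℕ → ↥(hullP M S hSne N0 F0 k).2 := fun i =>
    if h' : V i ∈ (hullP M S hSne N0 F0 k).2 then ⟨_, h'⟩
    else ⟨hSne.choose, choice_mem_stage M S hSne N0 F0 k⟩ with hvalF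
  set l : List (ℕ × ↥(hullP M S hSne N0 F0 k).1) := In.toList.map (fun i => (i, valN i))
  set L : List (ℕ × ↥(hullP M S hSne N0 F0 k).2) := IS.toList.map (fun i => (i, valF i))
  set vq : ℕ → M.carrier := vOf M (l.map (fun r => (r.1, (r.2 : M.carrier)))) with hvq
  set Vq : ℕ → Set M.carrier := VOf M S hSne (L.map (fun r => (r.1, (r.2 : Set M.carrier)))) with hVq
  have hvagree : ∀ i ∈ φ.numFV, vq i = (v i : M.carrier) := by
    intro i hi
    have hiIn : i ∈ In := by rw [hIn]; exact (φ.numFV_finite).mem_toFinset.2 hi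
    have : (l.map (fun r => (r.1, (r.2 : M.carrier)))) =
        In.toList.map (fun j => (j, (valN j : M.carrier))) := by
      simp [l, List.map_map]
    rw [hvq, vOf, this, lookup_map (fun j => (valN j : M.carrier)) In.toList i (Finset.mem_toList.2 hiIn)]
    have : (valN i : M.carrier) = (v i : M.carrier) := by
      rw [hvalN]
      simp only [dif_pos (hvk i hiIn)]
    rw [Option.getD_some, this]
  have hVagree : ∀ i ∈ φ.setFV, Vq i = V i := by
    intro i hi
    have hiIS : i ∈ IS := by rw [hIS]; exact (φ.setFV_finite).mem_toFinset.2 hi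
    have : (L.map (fun r => (r.1, (r.2 : Set M.carrier)))) =
        IS.toList.map (fun j => (j, (valF j : Set M.carrier))) := by
      simp [L, List.map_map]
    rw [hVq, VOf, this, lookup_map (fun j => (valF j : Set M.carrier)) IS.toList i (Finset.mem_toList.2 hiIS)]
    have : (valF i : Set M.carrier) = V i := by
      rw [hvalF]
      simp only [dif_pos (hVk i hiIS)]
    rw [Option.getD_some, this]
  have hsat_iff : ∀ a, (Formula.Sat M S (Function.update vq x a) Vq φ ↔
      Formula.Sat M S (Function.update (fun i => (v i : M.carrier)) x a) V φ) := by
    intro a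
    refine Formula.sat_agree φ (fun i hi => ?_) (fun i hi => hVagree i hi)
    rcases eq_or_ne i x with rfl | hix
    · simp
    · rw [Function.update_of_ne hix, Function.update_of_ne hix]
      exact hvagree i hi
  have hq : ∃ a, Formula.Sat M S (Function.update vq x a) Vq φ := by
    obtain ⟨a, ha⟩ := h
    exact ⟨a, (hsat_iff a).2 ha⟩
  have hwmem : wN M S φ x vq Vq ∈ NH M S hSne N0 F0 := by
    refine Set.mem_iUnion.2 ⟨k + 1, ?_⟩
    exact Or.inr ⟨(φ, x, l, L), rfl⟩
  exact ⟨⟨_, hwmem⟩, (hsat_iff _).1 (wN_spec M S hq)⟩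

theorem exS_witness (φ : Formula) (X : ℕ) (v : ℕ → ↥(NH M S hSne N0 F0))
    {V : ℕ → Set M.carrier} (hV : ∀ i, V i ∈ FH M S hSne N0 F0)
    (h : ∃ A ∈ S, Formula.Sat M S (fun i => (v i : M.carrier)) (Function.update V X A) φ) :
    ∃ B, B ∈ FH M S hSne N0 F0 ∧ B ∈ S ∧
      Formula.Sat M S (fun i => (v i : M.carrier)) (Function.update V X B) φ := by
  classical
  choose kv hkv using fun i => Set.mem_iUnion.1 (v i).2
  choose kV hkV using fun i => Set.mem_iUnion.1 (hV i)
  set In : Finset ℕ := (φ.numFV_finite).toFinset with hIn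
  set IS : Finset ℕ := (φ.setFV_finite).toFinset with hIS
  set k : ℕ := max (In.sup kv) (IS.sup kV) with hk
  have hvk : ∀ i ∈ In, ((v i : M.carrier)) ∈ (hullP M S hSne N0 F0 k).1 := fun i hi =>
    (hullP_mono M S hSne N0 F0 ((Finset.le_sup hi).trans (le_max_left _ _))).1 (hkv i)
  have hVk : ∀ i ∈ IS, V i ∈ (hullP M S hSne N0 F0 k).2 := fun i hi =>
    (hullP_mono M S hSne N0 F0 ((Finset.le_sup hi).trans (le_max_right _ _))).2 (hkV i)
  set valN : ℕ → ↥(hullP M S hSne N0 F0 k).1 := fun i =>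
    if h' : ((v i : M.carrier)) ∈ (hullP M S hSne N0 F0 k).1 then ⟨_, h'⟩
    else ⟨M.zero, zero_mem_stage M S hSne N0 F0 k⟩ with hvalN
  set valF : ℕ → ↥(hullP M S hSne N0 F0 k).2 := fun i =>
    if h' : V i ∈ (hullP M S hSne N0 F0 k).2 then ⟨_, h'⟩
    else ⟨hSne.choose, choice_mem_stage M S hSne N0 F0 k⟩ with hvalF
  set l : List (ℕ × ↥(hullP M S hSne N0 F0 k).1) := In.toList.map (fun i => (i, valN i))
  set L : List (ℕ × ↥(hullP M S hSne N0 F0 k).2) := IS.toList.map (fun i => (i, valF i))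
  set vq : ℕ → M.carrier := vOf M (l.map (fun r => (r.1, (r.2 : M.carrier)))) with hvq
  set Vq : ℕ → Set M.carrier := VOf M S hSne (L.map (fun r => (r.1, (r.2 : Set M.carrier)))) with hVq
  have hvagree : ∀ i ∈ φ.numFV, vq i = (v i : M.carrier) := by
    intro i hi
    have hiIn : i ∈ In := by rw [hIn]; exact (φ.numFV_finite).mem_toFinset.2 hi
    have : (l.map (fun r => (r.1, (r.2 : M.carrier)))) =
        In.toList.map (fun j => (j, (valN j : M.carrier))) := by
      simp [l, List.map_map]
    rw [hvq, vOf, this, lookup_map (fun j => (valN j : M.carrier)) In.toList i (Finset.mem_toList.2 hiIn)]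
    have : (valN i : M.carrier) = (v i : M.carrier) := by
      rw [hvalN]
      simp only [dif_pos (hvk i hiIn)]
    rw [Option.getD_some, this]
  have hVagree : ∀ i ∈ φ.setFV, Vq i = V i := by
    intro i hi
    have hiIS : i ∈ IS := by rw [hIS]; exact (φ.setFV_finite).mem_toFinset.2 hi
    have : (L.map (fun r => (r.1, (r.2 : Set M.carrier)))) =
        IS.toList.map (fun j => (j, (valF j : Set M.carrier))) := by
      simp [L, List.map_map]
    rw [hVq, VOf, this, lookup_map (fun j => (valF j : Set M.carrier)) IS.toList i (Finset.mem_toList.2 hiIS)]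
    have : (valF i : Set M.carrier) = V i := by
      rw [hvalF]
      simp only [dif_pos (hVk i hiIS)]
    rw [Option.getD_some, this]
  have hsat_iff : ∀ A, (Formula.Sat M S vq (Function.update Vq X A) φ ↔
      Formula.Sat M S (fun i => (v i : M.carrier)) (Function.update V X A) φ) := by
    intro A
    refine Formula.sat_agree φ (fun i hi => hvagree i hi) (fun i hi => ?_)
    rcases eq_or_ne i X with rfl | hiX
    · simp
    · rw [Function.update_of_ne hiX, Function.update_of_ne hiX]
      exact hVagree i hi
  have hq : ∃ A ∈ S, Formula.Sat M S vq (Function.update Vq X A) φ := by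
    obtain ⟨A, hAS, hA⟩ := h
    exact ⟨A, hAS, (hsat_iff A).2 hA⟩
  have hwmem : wS M S hSne φ X vq Vq ∈ FH M S hSne N0 F0 := by
    refine Set.mem_iUnion.2 ⟨k + 1, ?_⟩
    exact Or.inr ⟨(φ, X, l, L), rfl⟩
  exact ⟨_, hwmem, wS_mem M S hSne φ X vq Vq, (hsat_iff _).1 (wS_spec M S hSne hq)⟩

end Hull
section Hull2

variable (M : L1Struc) (S : Set (Set M.carrier)) (hSne : S.Nonempty)
  (N0 : Set M.carrier) (F0 : Set (Set M.carrier))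

theorem update_mem_FH {V : ℕ → Set M.carrier} (hV : ∀ i, V i ∈ FH M S hSne N0 F0)
    {X : ℕ} {B : Set M.carrier} (hB : B ∈ FH M S hSne N0 F0) :
    ∀ i, Function.update V X B i ∈ FH M S hSne N0 F0 := by
  intro i
  rcases eq_or_ne i X with rfl | h
  · simpa using hB
  · rw [Function.update_of_ne h]
    exact hV i

/-- **Elementarity of the hull** (Tarski–Vaught). -/
theorem hull_elem :
    ∀ (φ : Formula) (v : ℕ → ↥(NH M S hSne N0 F0)) (V : ℕ → Set M.carrier),
      (∀ i, V i ∈ FH M S hSne N0 F0) →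
      (Formula.Sat (hullStr M S hSne N0 F0) (SH M S hSne N0 F0) v
          (fun i => resSet M S hSne N0 F0 (V i)) φ ↔
        Formula.Sat M S (fun i => (v i : M.carrier)) V φ)
  | .eq t s, v, V, hV => by
      simp only [Formula.Sat]
      rw [← val_hull M S hSne N0 F0 t v, ← val_hull M S hSne N0 F0 s v]
      exact ⟨fun h => congrArg _ h, fun h => Subtype.ext h⟩
  | .lt t s, v, V, hV => by
      simp only [Formula.Sat]
      show M.lt _ _ ↔ M.lt _ _
      rw [val_hull M S hSne N0 F0 t v, val_hull M S hSne N0 F0 s v]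
  | .mem t X, v, V, hV => by
      simp only [Formula.Sat]
      show Subtype.val _ ∈ V X ↔ _
      rw [val_hull M S hSne N0 F0 t v]
  | .not φ, v, V, hV => by
      simp only [Formula.Sat]
      rw [hull_elem φ v V hV]
  | .and φ ψ, v, V, hV => by
      simp only [Formula.Sat]
      rw [hull_elem φ v V hV, hull_elem ψ v V hV]
  | .or φ ψ, v, V, hV => by
      simp only [Formula.Sat]
      rw [hull_elem φ v V hV, hull_elem ψ v V hV]
  | .imp φ ψ, v, V, hV => by
      simp only [Formula.Sat]
      rw [hull_elem φ v V hV, hull_elem ψ v V hV]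
  | .allN x φ, v, V, hV => by
      simp only [Formula.Sat]
      constructor
      · intro hL a
        by_contra hna
        obtain ⟨w, hw⟩ := exN_witness M S hSne N0 F0 (.not φ) x v hV ⟨a, hna⟩
        refine hw ?_
        have h1 := (hull_elem φ (Function.update v x w) V hV).1 (hL w)
        rw [show (fun i => ((Function.update v x w i : ↥(NH M S hSne N0 F0)) : M.carrier)) =
          Function.update (fun i => ((v i : M.carrier))) x (w : M.carrier) from
            (update_comp v x w Subtype.val).symm] at h1
        exact h1
      · intro hM a
        exact (fun a' : ↥(NH M S hSne N0 F0) =>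
          (hull_elem φ (Function.update v x a') V hV).2 (by
            rw [show (fun i => ((Function.update v x a' i : ↥(NH M S hSne N0 F0)) : M.carrier)) =
              Function.update (fun i => ((v i : M.carrier))) x (a' : M.carrier) from
                (update_comp v x a' Subtype.val).symm]
            exact hM (a' : M.carrier))) a
  | .exN x φ, v, V, hV => by
      simp only [Formula.Sat]
      constructor
      · rintro ⟨a, ha⟩
        refine (fun (a' : ↥(NH M S hSne N0 F0))
            (ha' : Formula.Sat (hullStr M S hSne N0 F0) (SH M S hSne N0 F0)
              (Function.update v x a') (fun i => resSet M S hSne N0 F0 (V i)) φ) => ?_) a ha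
        have h1 := (hull_elem φ (Function.update v x a') V hV).1 ha'
        rw [show (fun i => ((Function.update v x a' i : ↥(NH M S hSne N0 F0)) : M.carrier)) =
          Function.update (fun i => ((v i : M.carrier))) x (a' : M.carrier) from
            (update_comp v x a' Subtype.val).symm] at h1
        exact ⟨(a' : M.carrier), h1⟩
      · rintro ⟨a, ha⟩
        obtain ⟨w, hw⟩ := exN_witness M S hSne N0 F0 φ x v hV ⟨a, ha⟩
        refine ⟨w, (hull_elem φ (Function.update v x w) V hV).2 ?_⟩
        rw [show (fun i => ((Function.update v x w i : ↥(NH M S hSne N0 F0)) : M.carrier)) =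
          Function.update (fun i => ((v i : M.carrier))) x (w : M.carrier) from
            (update_comp v x w Subtype.val).symm]
        exact hw
  | .allS X φ, v, V, hV => by
      simp only [Formula.Sat]
      constructor
      · intro hL A hA
        by_contra hnA
        obtain ⟨B, hBF, hBS, hB⟩ := exS_witness M S hSne N0 F0 (.not φ) X v hV ⟨A, hA, hnA⟩
        have h1 := hL (resSet M S hSne N0 F0 B) ⟨B, hBF, hBS, rfl⟩
        rw [show Function.update (fun i => resSet M S hSne N0 F0 (V i)) X
              (resSet M S hSne N0 F0 B) =
            (fun i => resSet M S hSne N0 F0 (Function.update V X B i)) from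
            update_comp V X B (resSet M S hSne N0 F0)] at h1
        exact hB ((hull_elem φ v (Function.update V X B)
          (update_mem_FH M S hSne N0 F0 hV hBF)).1 h1)
      · intro hM B' hB'
        obtain ⟨B, hBF, hBS, rfl⟩ := hB'
        rw [show Function.update (fun i => resSet M S hSne N0 F0 (V i)) X
              (resSet M S hSne N0 F0 B) =
            (fun i => resSet M S hSne N0 F0 (Function.update V X B i)) from
            update_comp V X B (resSet M S hSne N0 F0)]
        exact (hull_elem φ v (Function.update V X B)
          (update_mem_FH M S hSne N0 F0 hV hBF)).2 (hM B hBS)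
  | .exS X φ, v, V, hV => by
      simp only [Formula.Sat]
      constructor
      · rintro ⟨B', hB', hsat⟩
        obtain ⟨B, hBF, hBS, rfl⟩ := hB'
        rw [show Function.update (fun i => resSet M S hSne N0 F0 (V i)) X
              (resSet M S hSne N0 F0 B) =
            (fun i => resSet M S hSne N0 F0 (Function.update V X B i)) from
            update_comp V X B (resSet M S hSne N0 F0)] at hsat
        exact ⟨B, hBS, (hull_elem φ v (Function.update V X B)
          (update_mem_FH M S hSne N0 F0 hV hBF)).1 hsat⟩
      · rintro ⟨A, hAS, hA⟩
        obtain ⟨B, hBF, hBS, hB⟩ := exS_witness M S hSne N0 F0 φ X v hV ⟨A, hAS, hA⟩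
        refine ⟨resSet M S hSne N0 F0 B, ⟨B, hBF, hBS, rfl⟩, ?_⟩
        rw [show Function.update (fun i => resSet M S hSne N0 F0 (V i)) X
              (resSet M S hSne N0 F0 B) =
            (fun i => resSet M S hSne N0 F0 (Function.update V X B i)) from
            update_comp V X B (resSet M S hSne N0 F0)]
        exact (hull_elem φ v (Function.update V X B)
          (update_mem_FH M S hSne N0 F0 hV hBF)).2 hB

theorem models2_hull {Γ : Set Formula} (hMod : Models2 M S Γ) :
    Models2 (hullStr M S hSne N0 F0) (SH M S hSne N0 F0) Γ := by
  intro φ hφ v V' hV'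
  choose B hBF hBS hVeq using hV'
  have hVfun : V' = fun i => resSet M S hSne N0 F0 (B i) := funext fun i => hVeq i
  rw [hVfun]
  exact (hull_elem M S hSne N0 F0 φ v B hBF).2 (hMod φ hφ _ B hBS)

end Hull2
section Hull3

variable (M : L1Struc) (S : Set (Set M.carrier)) (hSne : S.Nonempty)
  (N0 : Set M.carrier) (F0 : Set (Set M.carrier))

/-- A formula expressing `x₀ ∈ X₀ ⊕ X₁`. -/
def joinFml : Formula :=
  .or (.exN 1 (.and (.mem (.var 1) 0) (.eq (.var 0) (.add (.var 1) (.var 1)))))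
      (.exN 1 (.and (.mem (.var 1) 1) (.eq (.var 0) (.add (.add (.var 1) (.var 1)) .one))))

theorem sat_joinFml (N : L1Struc) (D : Set (Set N.carrier)) (v : ℕ → N.carrier)
    (V : ℕ → Set N.carrier) :
    Formula.Sat N D v V joinFml ↔ v 0 ∈ joinM N (V 0) (V 1) := by
  have h01 : (0 : ℕ) ≠ 1 := by norm_num
  constructor
  · rintro (⟨a, ha1, ha2⟩ | ⟨a, ha1, ha2⟩)
    · simp only [Formula.Sat, Term.val, Function.update_self, Function.update_of_ne h01] at ha1 ha2
      exact Or.inl ⟨a, ha1, ha2⟩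
    · simp only [Formula.Sat, Term.val, Function.update_self, Function.update_of_ne h01] at ha1 ha2
      exact Or.inr ⟨a, ha1, ha2⟩
  · rintro (⟨a, ha1, ha2⟩ | ⟨a, ha1, ha2⟩)
    · refine Or.inl ⟨a, ?_, ?_⟩ <;>
        simp only [Formula.Sat, Term.val, Function.update_self, Function.update_of_ne h01]
      · exact ha1
      · exact ha2
    · refine Or.inr ⟨a, ?_, ?_⟩ <;>
        simp only [Formula.Sat, Term.val, Function.update_self, Function.update_of_ne h01]
      · exact ha1
      · exact ha2

theorem res_joinM {A B : Set M.carrier} (hA : A ∈ FH M S hSne N0 F0)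
    (hB : B ∈ FH M S hSne N0 F0) :
    joinM (hullStr M S hSne N0 F0) (resSet M S hSne N0 F0 A) (resSet M S hSne N0 F0 B) =
      resSet M S hSne N0 F0 (joinM M A B) := by
  ext x
  have hVmem : ∀ i, (fun i => if i = 0 then A else B) i ∈ FH M S hSne N0 F0 := by
    intro i
    by_cases h : i = 0 <;> simp [h, hA, hB]
  have h := hull_elem M S hSne N0 F0 joinFml (fun _ => x)
    (fun i => if i = 0 then A else B) hVmem
  rw [sat_joinFml, sat_joinFml] at h
  simp only [if_pos rfl, if_neg (by norm_num : (1 : ℕ) ≠ 0)] at h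
  exact h

theorem numM_hull (m : ℕ) :
    Subtype.val (numM (hullStr M S hSne N0 F0) m) = numM M m := by
  induction m with
  | zero => rfl
  | succ m ih =>
    show M.add (Subtype.val (numM (hullStr M S hSne N0 F0) m)) M.one = _
    rw [ih]
    rfl

theorem satIdx_hull {θ : Formula} (hθ : θ.IsArithmetic) (i a : ↥(NH M S hSne N0 F0))
    {X : Set M.carrier} (hX : X ∈ FH M S hSne N0 F0) :
    satIdx θ (hullStr M S hSne N0 F0) i a (resSet M S hSne N0 F0 X) ↔
      satIdx θ M (i : M.carrier) (a : M.carrier) X := by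
  have hveq : (fun m => ((if m = 0 then i else if m = 1 then a
        else (hullStr M S hSne N0 F0).zero : ↥(NH M S hSne N0 F0)) : M.carrier)) =
      (fun m => if m = 0 then (i : M.carrier) else if m = 1 then (a : M.carrier)
        else M.zero) := by
    funext m
    split_ifs <;> rfl
  have h1 : satIdx θ (hullStr M S hSne N0 F0) i a (resSet M S hSne N0 F0 X) ↔
      Formula.Sat (hullStr M S hSne N0 F0) (SH M S hSne N0 F0)
        (fun m => if m = 0 then i else if m = 1 then a else (hullStr M S hSne N0 F0).zero)
        (fun _ => resSet M S hSne N0 F0 X) θ := Formula.sat_arith θ hθ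
  have h2 := hull_elem M S hSne N0 F0 θ
    (fun m => if m = 0 then i else if m = 1 then a else (hullStr M S hSne N0 F0).zero)
    (fun _ => X) (fun _ => hX)
  rw [hveq] at h2
  have h3 : Formula.Sat M S
      (fun m => if m = 0 then (i : M.carrier) else if m = 1 then (a : M.carrier) else M.zero)
      (fun _ => X) θ ↔ satIdx θ M (i : M.carrier) (a : M.carrier) X :=
    Formula.sat_arith θ hθ
  exact h1.trans (h2.trans h3)

end Hull3
section Glue

theorem histL_succ (M : L1Struc) (f : ℕ → Set M.carrier) (n : ℕ) :
    histL M f (n + 1) = histL M f n ++ [f (n + 1)] := by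
  simp [histL, List.range_succ]

theorem histL_zero (M : L1Struc) (f : ℕ → Set M.carrier) :
    histL M f 0 = [f 0] := by
  simp [histL, List.range_succ]

theorem joinList_concat (M : L1Struc) (l : List (Set M.carrier)) (hl : l ≠ [])
    (Y : Set M.carrier) :
    joinList M (l ++ [Y]) = joinM M (joinList M l) Y := by
  cases l with
  | nil => exact absurd rfl hl
  | cons X rest =>
    show List.foldl (joinM M) X (rest ++ [Y]) = _
    rw [List.foldl_append]
    rfl

theorem histL_ne_nil (M : L1Struc) (f : ℕ → Set M.carrier) (n : ℕ) :
    histL M f n ≠ [] := by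
  simp [histL]

theorem joinList_histL_succ (M : L1Struc) (f : ℕ → Set M.carrier) (n : ℕ) :
    joinList M (histL M f (n + 1)) = joinM M (joinList M (histL M f n)) (f (n + 1)) := by
  rw [histL_succ, joinList_concat M _ (histL_ne_nil M f n)]

theorem joinList_histL_zero (M : L1Struc) (f : ℕ → Set M.carrier) :
    joinList M (histL M f 0) = f 0 := by
  rw [histL_zero]
  rfl

/-- `Sat` of an arithmetic formula at the all-zero valuation with two set parameters,
in the ultraproduct. -/
theorem sat2_ultra (Mi : ℕ → L1Struc) (U : Ultrafilter ℕ)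
    (Ti : ∀ n, Set (Set (Mi n).carrier)) (hTne : ∀ n, (Ti n).Nonempty)
    {ψ : Formula} (hψ : ψ.IsArithmetic) (A B : ∀ n, Set (Mi n).carrier) :
    Formula.Sat (ultraStr Mi U) Set.univ (fun _ => (ultraStr Mi U).zero)
        (fun i => if i = 0 then setU Mi U A else setU Mi U B) ψ ↔
      {n | Formula.Sat (Mi n) Set.univ (fun _ => (Mi n).zero)
        (fun i => if i = 0 then A n else B n) ψ} ∈ U := by
  have hV : (fun i => if i = 0 then setU Mi U A else setU Mi U B) =
      (fun i => setU Mi U ((fun j => if j = 0 then A else B) i)) := by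
    funext i
    by_cases h : i = 0 <;> simp [h]
  rw [hV]
  have hlos := los Mi U Ti hTne ψ (fun _ n => (Mi n).zero) (fun j => if j = 0 then A else B)
  have hiff : ∀ n, (Formula.Sat (Mi n) (Ti n) (fun i => (fun _ n => (Mi n).zero) i n)
      (fun i => (fun j : ℕ => if j = 0 then A else B) i n) ψ ↔
      Formula.Sat (Mi n) Set.univ (fun _ => (Mi n).zero)
        (fun i => if i = 0 then A n else B n) ψ) := by
    intro n
    rw [show (fun i => (fun j : ℕ => if j = 0 then A else B) i n) =
        (fun i => if i = 0 then A n else B n) from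
      funext fun i => by by_cases h : i = 0 <;> simp [h]]
    exact Formula.sat_arith ψ hψ
  constructor
  · intro h
    have h' : Formula.Sat (ultraStr Mi U) (SU Mi U Ti) (fun _ => (ultraStr Mi U).zero)
        (fun i => setU Mi U ((fun j => if j = 0 then A else B) i)) ψ :=
      (Formula.sat_arith ψ hψ).1 h
    exact umem_mono (hlos.1 h') fun n hn => (hiff n).1 hn
  · intro h
    refine (Formula.sat_arith ψ hψ).2 (hlos.2 ?_)
    exact umem_mono h fun n hn => (hiff n).2 hn

/-- `Sat` of an arithmetic formula at the all-zero valuation with two set parameters,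
across the hull. -/
theorem sat2_hull (M : L1Struc) (S : Set (Set M.carrier)) (hSne : S.Nonempty)
    (N0 : Set M.carrier) (F0 : Set (Set M.carrier))
    {ψ : Formula} (hψ : ψ.IsArithmetic) {A B : Set M.carrier}
    (hA : A ∈ FH M S hSne N0 F0) (hB : B ∈ FH M S hSne N0 F0) :
    Formula.Sat (hullStr M S hSne N0 F0) Set.univ
        (fun _ => (hullStr M S hSne N0 F0).zero)
        (fun i => if i = 0 then resSet M S hSne N0 F0 A else resSet M S hSne N0 F0 B) ψ ↔
      Formula.Sat M Set.univ (fun _ => M.zero) (fun i => if i = 0 then A else B) ψ := by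
  have hV : (fun i => if i = 0 then resSet M S hSne N0 F0 A else resSet M S hSne N0 F0 B) =
      (fun i => resSet M S hSne N0 F0 (if i = 0 then A else B)) := by
    funext i
    by_cases h : i = 0 <;> simp [h]
  rw [hV]
  have hVmem : ∀ i, (if i = 0 then A else B) ∈ FH M S hSne N0 F0 := fun i => by
    by_cases h : i = 0 <;> simp [h, hA, hB]
  have h2 := hull_elem M S hSne N0 F0 ψ (fun _ => (hullStr M S hSne N0 F0).zero)
    (fun i => if i = 0 then A else B) hVmem
  exact (Formula.sat_arith ψ hψ).trans (h2.trans (Formula.sat_arith ψ hψ))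

end Glue
section HullContra

theorem hull_contra {Γ : Set Formula} (hExt : Delta01CA ⊆ Γ)
    {θ Λ : Formula} {P Q : Pi12Problem}
    (hθa : θ.IsArithmetic) (hPa : P.theta.IsArithmetic)
    (hQa : Q.theta.IsArithmetic) (hQsa : Q.psi.IsArithmetic) (hΛa : Λ.IsArithmetic)
    (hwin : ∀ (M : L1Struc) (S : Set (Set M.carrier)), Countable M.carrier →
      Models2 M S Γ → D01Closed M S → ∀ f g,
        AccordsLambda θ Λ P Q M (CondS M S) f g → P2WinsRun P Q M (CondS M S) f g)
    (M : L1Struc) (S : Set (Set M.carrier)) (hMod : Models2 M S Γ)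
    (f : ℕ → Set M.carrier) (e i j : ℕ → M.carrier) (Z : ℕ → Set M.carrier)
    (hfS : ∀ m, f m ∈ S)
    (hInst : P.Inst M (f 0))
    (hΛsat : ∀ m, Λ.Sat M Set.univ
      (fun k => if k = 0 then numM M m else if k = 1 then e m else M.zero)
      (fun _ => joinList M (histL M f m)))
    (hcant : ∀ m, cantorPairRel M (i m) (j m) (e m))
    (hiff : ∀ m a, satIdx θ M (i m) a (joinList M (histL M f m)) ↔
      ¬ satIdx θ M (j m) a (joinList M (histL M f m)))
    (hZdef : ∀ m a, a ∈ Z m ↔ satIdx θ M (i m) a (joinList M (histL M f m)))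
    (hflag : ∀ m, M.zero ∉ Z m)
    (hQInst : ∀ m, Q.Inst M {a | M.add a M.one ∈ Z m})
    (hQSol : ∀ m, Q.Sol M {a | M.add a M.one ∈ Z m} (f (m + 1))) : False := by
  classical
  have hSne : S.Nonempty := ⟨f 0, hfS 0⟩
  set J : ℕ → Set M.carrier := fun m => joinList M (histL M f m) with hJ
  set N0 : Set M.carrier := Set.range e ∪ Set.range i ∪ Set.range j with hN0
  set F0 : Set (Set M.carrier) := Set.range f ∪ Set.range Z ∪
    Set.range (fun m => {a | M.add a M.one ∈ Z m}) ∪ Set.range J with hF0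
  -- memberships in the hull
  have hN0sub : N0 ⊆ NH M S hSne N0 F0 := fun a ha => Set.mem_iUnion.2 ⟨0, Or.inl ha⟩
  have hF0sub : F0 ⊆ FH M S hSne N0 F0 := fun A hA => Set.mem_iUnion.2 ⟨0, Or.inl hA⟩
  have heN : ∀ m, e m ∈ NH M S hSne N0 F0 := fun m =>
    hN0sub (Or.inl (Or.inl ⟨m, rfl⟩))
  have hiN : ∀ m, i m ∈ NH M S hSne N0 F0 := fun m =>
    hN0sub (Or.inl (Or.inr ⟨m, rfl⟩))
  have hjN : ∀ m, j m ∈ NH M S hSne N0 F0 := fun m =>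
    hN0sub (Or.inr ⟨m, rfl⟩)
  have hfF : ∀ m, f m ∈ FH M S hSne N0 F0 := fun m =>
    hF0sub (Or.inl (Or.inl (Or.inl ⟨m, rfl⟩)))
  have hZF : ∀ m, Z m ∈ FH M S hSne N0 F0 := fun m =>
    hF0sub (Or.inl (Or.inl (Or.inr ⟨m, rfl⟩)))
  have hshF : ∀ m, {a | M.add a M.one ∈ Z m} ∈ FH M S hSne N0 F0 := fun m =>
    hF0sub (Or.inl (Or.inr ⟨m, rfl⟩))
  have hJF : ∀ m, J m ∈ FH M S hSne N0 F0 := fun m => hF0sub (Or.inr ⟨m, rfl⟩)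
  -- countability of the hull
  have hN0c : N0.Countable :=
    ((Set.countable_range e).union (Set.countable_range i)).union (Set.countable_range j)
  have hF0c : F0.Countable :=
    (((Set.countable_range f).union (Set.countable_range Z)).union
      (Set.countable_range _)).union (Set.countable_range J)
  obtain ⟨hNc, hFc⟩ := NH_countable M S hSne N0 F0 hN0c hF0c
  haveI : Countable ↥(NH M S hSne N0 F0) := hNc.to_subtype
  -- the hull structure and run
  set M' : L1Struc := hullStr M S hSne N0 F0 with hM'
  set S' : Set (Set M'.carrier) := SH M S hSne N0 F0 with hS'
  have hcount : Countable M'.carrier := by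
    show Countable ↥(NH M S hSne N0 F0)
    infer_instance
  set f' : ℕ → Set M'.carrier := fun m => resSet M S hSne N0 F0 (f m) with hf'
  set Z' : ℕ → Set M'.carrier := fun m => resSet M S hSne N0 F0 (Z m) with hZ'
  set e' : ℕ → M'.carrier := fun m => (⟨e m, heN m⟩ : ↥(NH M S hSne N0 F0)) with he'
  set g' : ℕ → Prop × Set M'.carrier :=
    fun m => ((M'.zero ∈ Z' m), {a | M'.add a M'.one ∈ Z' m}) with hg'
  -- the restricted joins
  have hresJ : ∀ m, joinList M' (histL M' f' m) = resSet M S hSne N0 F0 (J m) := by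
    intro m
    induction m with
    | zero =>
      show joinList M' (histL M' f' 0) =
        resSet M S hSne N0 F0 (joinList M (histL M f 0))
      rw [joinList_histL_zero, joinList_histL_zero]
    | succ m ih =>
      show joinList M' (histL M' f' (m + 1)) =
        resSet M S hSne N0 F0 (joinList M (histL M f (m + 1)))
      rw [joinList_histL_succ, joinList_histL_succ, ih]
      show joinM M' (resSet M S hSne N0 F0 (J m)) (resSet M S hSne N0 F0 (f (m + 1))) = _
      rw [res_joinM M S hSne N0 F0 (hJF m) (hfF (m + 1))]
  -- the run facts in the hull
  have hInst' : P.Inst M' (f' 0) := by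
    have h2 := sat2_hull M S hSne N0 F0 hPa (hfF 0) (hfF 0)
    have hL : (fun k : ℕ => if k = 0 then resSet M S hSne N0 F0 (f 0)
        else resSet M S hSne N0 F0 (f 0)) =
        (fun _ : ℕ => resSet M S hSne N0 F0 (f 0)) := funext fun k => ite_self _
    have hR : (fun k : ℕ => if k = 0 then f 0 else f 0) = (fun _ : ℕ => f 0) :=
      funext fun k => ite_self _
    rw [hL, hR] at h2
    exact h2.2 hInst
  have hfS' : ∀ m, f' m ∈ S' := fun m => ⟨f m, hfF m, hfS m, rfl⟩
  have hflag' : ∀ m, ¬ (g' m).1 := by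
    intro m hm
    exact hflag m hm
  have hg2 : ∀ m, (g' m).2 = resSet M S hSne N0 F0 {a | M.add a M.one ∈ Z m} := by
    intro m
    rfl
  have hQInst' : ∀ m, Q.Inst M' ((g' m).2) := by
    intro m
    have h2 := sat2_hull M S hSne N0 F0 hQa (hshF m) (hshF m)
    have hL : (fun k : ℕ => if k = 0 then resSet M S hSne N0 F0 {a | M.add a M.one ∈ Z m}
        else resSet M S hSne N0 F0 {a | M.add a M.one ∈ Z m}) =
        (fun _ : ℕ => resSet M S hSne N0 F0 {a | M.add a M.one ∈ Z m}) :=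
      funext fun k => ite_self _
    have hR : (fun k : ℕ => if k = 0 then {a | M.add a M.one ∈ Z m}
        else {a | M.add a M.one ∈ Z m}) = (fun _ : ℕ => {a | M.add a M.one ∈ Z m}) :=
      funext fun k => ite_self _
    rw [hL, hR] at h2
    exact h2.2 (hQInst m)
  have hQSol' : ∀ m, Q.Sol M' ((g' m).2) (f' (m + 1)) := by
    intro m
    unfold Pi12Problem.Sol
    rw [hg2 m, hf']
    exact (sat2_hull M S hSne N0 F0 hQsa (hshF m) (hfF (m + 1))).2 (hQSol m)
  -- accordance data in the hull
  have hacc' : ∀ m, Λ.Sat M' Set.univ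
      (fun k => if k = 0 then numM M' m else if k = 1 then e' m else M'.zero)
      (fun _ => joinList M' (histL M' f' m)) ∧
      IsPhi θ M' (e' m) (joinList M' (histL M' f' m)) (Z' m) ∧
      g' m = ((M'.zero ∈ Z' m), {a | M'.add a M'.one ∈ Z' m}) := by
    intro m
    refine ⟨?_, ?_, rfl⟩
    · rw [hresJ m]
      have hveq : (fun k => ((if k = 0 then numM M' m else if k = 1 then e' m
            else M'.zero : ↥(NH M S hSne N0 F0)) : M.carrier)) =
          (fun k => if k = 0 then numM M m else if k = 1 then e m else M.zero) := by
        funext k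
        rcases eq_or_ne k 0 with rfl | h0
        · exact numM_hull M S hSne N0 F0 m
        · simp only [if_neg h0]
          rcases eq_or_ne k 1 with rfl | h1
          · rfl
          · simp only [if_neg h1]
            rfl
      have h1 : Formula.Sat M' Set.univ
          (fun k => if k = 0 then numM M' m else if k = 1 then e' m else M'.zero)
          (fun _ => resSet M S hSne N0 F0 (J m)) Λ ↔
          Formula.Sat M' S'
            (fun k => if k = 0 then numM M' m else if k = 1 then e' m else M'.zero)
            (fun _ => resSet M S hSne N0 F0 (J m)) Λ := Formula.sat_arith Λ hΛa
      have h2 := hull_elem M S hSne N0 F0 Λ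
        (fun k => if k = 0 then numM M' m else if k = 1 then e' m else M'.zero)
        (fun _ => J m) (fun _ => hJF m)
      rw [hveq] at h2
      have h3 : Formula.Sat M S
          (fun k => if k = 0 then numM M m else if k = 1 then e m else M.zero)
          (fun _ => J m) Λ ↔
          Formula.Sat M Set.univ
            (fun k => if k = 0 then numM M m else if k = 1 then e m else M.zero)
            (fun _ => J m) Λ := Formula.sat_arith Λ hΛa
      exact (h1.trans (h2.trans h3)).2 (hΛsat m)
    · refine ⟨(⟨i m, hiN m⟩ : ↥(NH M S hSne N0 F0)),
        (⟨j m, hjN m⟩ : ↥(NH M S hSne N0 F0)), ?_, ?_, ?_⟩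
      · exact Subtype.ext (hcant m)
      · intro a
        have h := fun (a' : ↥(NH M S hSne N0 F0)) =>
          (satIdx_hull M S hSne N0 F0 hθa (⟨i m, hiN m⟩ : ↥(NH M S hSne N0 F0)) a'
            (hJF m)).trans ((hiff m (a' : M.carrier)).trans
              (not_congr (satIdx_hull M S hSne N0 F0 hθa
                (⟨j m, hjN m⟩ : ↥(NH M S hSne N0 F0)) a' (hJF m)).symm))
        rw [hresJ m]
        exact h a
      · intro a
        have h := fun (a' : ↥(NH M S hSne N0 F0)) =>
          (hZdef m (a' : M.carrier)).trans
            (satIdx_hull M S hSne N0 F0 hθa (⟨i m, hiN m⟩ : ↥(NH M S hSne N0 F0)) a'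
              (hJF m)).symm
        rw [hresJ m]
        exact h a
  -- the hull is a model with the closure properties
  have hS'ne : S'.Nonempty := ⟨f' 0, hfS' 0⟩
  have hMod' : Models2 M' S' Γ := models2_hull M S hSne N0 F0 hMod
  have hD01' : D01Closed M' S' := d01closed_of_models hS'ne hMod' hExt
  have hCondS : ∀ m, CondS M' S' (histL M' f' m) := by
    intro m X hX
    obtain ⟨k, _, rfl⟩ := mem_histL.1 hX
    exact hfS' k
  -- the dichotomy on `Board` membership
  by_cases hB : ∀ m, (g' m).2 ∈ Board M' (histL M' f' m)
  · -- the run is alive forever: contradiction with hwin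
    have haliveH : ∀ m, Alive P Q M' (CondS M' S') f' g' m := by
      intro m
      induction m with
      | zero => exact ⟨hInst', hCondS 0⟩
      | succ m ih =>
        exact ⟨ih, hflag' m, hB m, hQInst' m, hQSol' m, hCondS (m + 1)⟩
    have haccH : AccordsLambda θ Λ P Q M' (CondS M' S') f' g' := by
      intro m _
      exact ⟨e' m, Z' m, (hacc' m).1, (hacc' m).2.1, (hacc' m).2.2⟩
    exact (hwin M' S' hcount hMod' hD01' f' g' haccH).2 haliveH
  · -- a least stage where Board membership fails: illegal accordant move
    push_neg at hB
    have hex : ∃ m, ¬ (g' m).2 ∈ Board M' (histL M' f' m) := hB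
    set m₀ := Nat.find hex with hm₀
    have hfail : ¬ (g' m₀).2 ∈ Board M' (histL M' f' m₀) := Nat.find_spec hex
    have hmin : ∀ m, m < m₀ → (g' m).2 ∈ Board M' (histL M' f' m) := fun m hm =>
      of_not_not (Nat.find_min hex hm)
    have haliveH : ∀ m, m ≤ m₀ → Alive P Q M' (CondS M' S') f' g' m := by
      intro m
      induction m with
      | zero => exact fun _ => ⟨hInst', hCondS 0⟩
      | succ m ih =>
        intro hm
        exact ⟨ih (Nat.le_of_succ_le hm), hflag' m, hmin m hm, hQInst' m, hQSol' m,
          hCondS (m + 1)⟩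
    have haccH : AccordsLambda θ Λ P Q M' (CondS M' S') f' g' := by
      intro m _
      exact ⟨e' m, Z' m, (hacc' m).1, (hacc' m).2.1, (hacc' m).2.2⟩
    rcases (hwin M' S' hcount hMod' hD01' f' g' haccH).1 m₀ (haliveH m₀ le_rfl) with
      hcont | hwinm
    · exact hfail hcont.2.1
    · exact hflag' m₀ hwinm.1

end HullContra
section Merge

theorem merge_runs {Γ : Set Formula} (hExt : Delta01CA ⊆ Γ)
    {θ Λ : Formula} {P Q : Pi12Problem}
    (hθa : θ.IsArithmetic) (hPa : P.theta.IsArithmetic)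
    (hQa : Q.theta.IsArithmetic) (hQsa : Q.psi.IsArithmetic) (hΛa : Λ.IsArithmetic)
    (hwin : ∀ (M : L1Struc) (S : Set (Set M.carrier)), Countable M.carrier →
      Models2 M S Γ → D01Closed M S → ∀ f g,
        AccordsLambda θ Λ P Q M (CondS M S) f g → P2WinsRun P Q M (CondS M S) f g)
    (hnb : ∀ n : ℕ, ∃ M : L1Struc, ∃ f : ℕ → Set M.carrier,
      ∃ g : ℕ → Prop × Set M.carrier,
        AccordsLambda θ Λ P Q M (CondG Γ M) f g ∧ Alive P Q M (CondG Γ M) f g n) :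
    False := by
  classical
  choose Mi fi gi hacc halive using hnb
  have hcond : ∀ n, CondG Γ (Mi n) (histL (Mi n) (fi n) n) := fun n =>
    alive_condC (halive n)
  choose Ti hBT hMT using hcond
  have hTne : ∀ n, (Ti n).Nonempty := fun n => ⟨Set.univ, hBT n univ_mem_Mcl⟩
  have hsel : ∀ m n : ℕ, ∃ p : (Mi n).carrier × Set (Mi n).carrier, m ≤ n →
      (Λ.Sat (Mi n) Set.univ (fun k => if k = 0 then numM (Mi n) m
          else if k = 1 then p.1 else (Mi n).zero)
        (fun _ => joinList (Mi n) (histL (Mi n) (fi n) m)) ∧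
        IsPhi θ (Mi n) p.1 (joinList (Mi n) (histL (Mi n) (fi n) m)) p.2 ∧
        gi n m = (((Mi n).zero ∈ p.2), {a | (Mi n).add a (Mi n).one ∈ p.2})) := by
    intro m n
    by_cases hmn : m ≤ n
    · obtain ⟨e, Z, h1, h2, h3⟩ := hacc n m ((halive n).of_le hmn)
      exact ⟨(e, Z), fun _ => ⟨h1, h2, h3⟩⟩
    · exact ⟨((Mi n).zero, ∅), fun h => absurd h hmn⟩
  choose eZ heZ using hsel
  set U : Ultrafilter ℕ := Ultrafilter.of Filter.cofinite with hUdef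
  have htail : ∀ m, {n | m ≤ n} ∈ U := by
    intro m
    have h1 : {n : ℕ | m ≤ n} ∈ Filter.cofinite := by
      rw [Filter.mem_cofinite]
      refine (Set.finite_Iio m).subset fun n hn => ?_
      exact not_le.1 (show ¬ (m ≤ n) from hn)
    exact Ultrafilter.mem_coe.1 (Filter.le_def.1 (Ultrafilter.of_le Filter.cofinite) _ h1)
  -- factor facts
  have hAfT : ∀ m n, (if m ≤ n then fi n m else Set.univ) ∈ Ti n := by
    intro m n
    by_cases hmn : m ≤ n
    · rw [if_pos hmn]
      exact hBT n (mem_Mcl_self (mem_histL.2 ⟨m, hmn, rfl⟩))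
    · rw [if_neg hmn]
      exact hBT n univ_mem_Mcl
  -- the merged joins
  have hJUfact : ∀ m, joinList (ultraStr Mi U) (histL (ultraStr Mi U)
      (fun m' => setU Mi U (fun n => if m' ≤ n then fi n m' else Set.univ)) m) =
      setU Mi U (fun n => joinList (Mi n) (histL (Mi n) (fi n) m)) := by
    intro m
    have h1 : histL (ultraStr Mi U)
        (fun m' => setU Mi U (fun n => if m' ≤ n then fi n m' else Set.univ)) m =
        ((List.range (m + 1)).map
          (fun m' n => if m' ≤ n then fi n m' else Set.univ)).map (setU Mi U) := by
      show (List.range (m + 1)).map _ = _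
      rw [List.map_map]
      rfl
    rw [h1, joinList_setU Mi U _ (by simp)]
    refine setU_congr Mi U (umem_mono (htail m) fun n hn => ?_)
    have hlist : (((List.range (m + 1)).map
        (fun m' n => if m' ≤ n then fi n m' else Set.univ)).map (fun A => A n)) =
        histL (Mi n) (fi n) m := by
      rw [List.map_map]
      show (List.range (m + 1)).map _ = (List.range (m + 1)).map (fi n)
      refine List.map_congr_left fun k hk => ?_
      have hkm : k ≤ m := Nat.lt_succ_iff.1 (List.mem_range.1 hk)
      show (if k ≤ n then fi n k else Set.univ) = fi n k
      exact if_pos (hkm.trans hn)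
    show joinList (Mi n) (((List.range (m + 1)).map
        (fun m' n => if m' ≤ n then fi n m' else Set.univ)).map (fun A => A n)) =
      joinList (Mi n) (histL (Mi n) (fi n) m)
    rw [hlist]
  -- membership of the merged moves
  have hfSU : ∀ m, setU Mi U (fun n => if m ≤ n then fi n m else Set.univ) ∈ SU Mi U Ti :=
    fun m => ⟨_, hAfT m, rfl⟩
  -- the first move is an instance
  have hInstU : P.Inst (ultraStr Mi U)
      (setU Mi U (fun n => if 0 ≤ n then fi n 0 else Set.univ)) := by
    have h2 := sat2_ultra Mi U Ti hTne hPa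
      (fun n => if 0 ≤ n then fi n 0 else Set.univ)
      (fun n => if 0 ≤ n then fi n 0 else Set.univ)
    have hL : (fun k : ℕ => if k = 0
        then setU Mi U (fun n => if 0 ≤ n then fi n 0 else Set.univ)
        else setU Mi U (fun n => if 0 ≤ n then fi n 0 else Set.univ)) =
        (fun _ : ℕ => setU Mi U (fun n => if 0 ≤ n then fi n 0 else Set.univ)) :=
      funext fun k => ite_self _
    rw [hL] at h2
    refine h2.2 (umem_mono (htail 0) fun n _ => ?_)
    have hVn : (fun k : ℕ => if k = 0 then (if 0 ≤ n then fi n 0 else Set.univ)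
        else (if 0 ≤ n then fi n 0 else Set.univ)) = (fun _ : ℕ => fi n 0) := by
      funext k
      rw [ite_self, if_pos (Nat.zero_le n)]
    rw [hVn]
    exact ((halive n).of_le (Nat.zero_le n)).1
  -- the Λ-condition in the ultraproduct
  have hΛU : ∀ m, Λ.Sat (ultraStr Mi U) Set.univ
      (fun k => if k = 0 then numM (ultraStr Mi U) m
        else if k = 1 then umk Mi U (fun n => (eZ m n).1) else (ultraStr Mi U).zero)
      (fun _ => joinList (ultraStr Mi U) (histL (ultraStr Mi U)
        (fun m' => setU Mi U (fun n => if m' ≤ n then fi n m' else Set.univ)) m)) := by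
    intro m
    rw [hJUfact m]
    have hv : (fun k => if k = 0 then numM (ultraStr Mi U) m
        else if k = 1 then umk Mi U (fun n => (eZ m n).1) else (ultraStr Mi U).zero) =
        (fun k => umk Mi U ((fun k n => if k = 0 then numM (Mi n) m
          else if k = 1 then (eZ m n).1 else (Mi n).zero) k)) := by
      funext k
      rcases eq_or_ne k 0 with rfl | h0
      · exact numM_umk Mi U m
      · simp only [if_neg h0]
        rcases eq_or_ne k 1 with rfl | h1
        · rfl
        · simp only [if_neg h1]
    rw [hv]
    refine (Formula.sat_arith Λ hΛa).2
      ((los Mi U Ti hTne Λ _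
        (fun _ => fun n => joinList (Mi n) (histL (Mi n) (fi n) m))).2
        (umem_mono (htail m) fun n hn => ?_))
    exact (Formula.sat_arith Λ hΛa).1 ((heZ m n hn).1)
  -- IsPhi in the ultraproduct
  have hPhiU : ∀ m, IsPhi θ (ultraStr Mi U) (umk Mi U (fun n => (eZ m n).1))
      (joinList (ultraStr Mi U) (histL (ultraStr Mi U)
        (fun m' => setU Mi U (fun n => if m' ≤ n then fi n m' else Set.univ)) m))
      (setU Mi U (fun n => (eZ m n).2)) := by
    intro m
    rw [hJUfact m]
    exact isPhi_ultra Mi U Ti hTne hθa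
      (umem_mono (htail m) fun n hn => (heZ m n hn).2.1)
  choose iU jU hPhi using hPhiU
  -- the victory flag is always false
  have hflagU : ∀ m, (ultraStr Mi U).zero ∉ setU Mi U (fun n => (eZ m n).2) := by
    intro m hmem
    have h1 : {n | (Mi n).zero ∈ (eZ m n).2} ∈ U := hmem
    obtain ⟨n, hn1, hn2⟩ := umem_elim h1 (htail (m + 1))
    have halive' := (halive n).of_le hn2
    have h3 := (heZ m n (Nat.le_of_succ_le hn2)).2.2
    have h5 : ¬ (gi n m).1 := halive'.2.1
    rw [h3] at h5
    exact h5 hn1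
  -- the shifted move
  have hshiftU : ∀ m, {a | (ultraStr Mi U).add a (ultraStr Mi U).one ∈
      setU Mi U (fun n => (eZ m n).2)} =
      setU Mi U (fun n => {b | (Mi n).add b (Mi n).one ∈ (eZ m n).2}) := by
    intro m
    ext c
    obtain ⟨x, rfl⟩ := umk_surj Mi U c
    exact Iff.rfl
  -- the shifted moves are Q-instances
  have hQInstU : ∀ m, Q.Inst (ultraStr Mi U)
      {a | (ultraStr Mi U).add a (ultraStr Mi U).one ∈
        setU Mi U (fun n => (eZ m n).2)} := by
    intro m
    show Formula.Sat _ _ _ _ _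
    rw [hshiftU m]
    have h2 := sat2_ultra Mi U Ti hTne hQa
      (fun n => {b | (Mi n).add b (Mi n).one ∈ (eZ m n).2})
      (fun n => {b | (Mi n).add b (Mi n).one ∈ (eZ m n).2})
    have hL : (fun k : ℕ => if k = 0
        then setU Mi U (fun n => {b | (Mi n).add b (Mi n).one ∈ (eZ m n).2})
        else setU Mi U (fun n => {b | (Mi n).add b (Mi n).one ∈ (eZ m n).2})) =
        (fun _ : ℕ => setU Mi U (fun n => {b | (Mi n).add b (Mi n).one ∈ (eZ m n).2})) :=
      funext fun k => ite_self _
    rw [hL] at h2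
    refine h2.2 (umem_mono (htail (m + 1)) fun n hn => ?_)
    have halive' := (halive n).of_le hn
    have h3 := (heZ m n (Nat.le_of_succ_le hn)).2.2
    have h4 : (gi n m).2 = {b | (Mi n).add b (Mi n).one ∈ (eZ m n).2} :=
      congrArg Prod.snd h3
    have hVn : (fun k : ℕ => if k = 0 then {b | (Mi n).add b (Mi n).one ∈ (eZ m n).2}
        else {b | (Mi n).add b (Mi n).one ∈ (eZ m n).2}) =
        (fun _ : ℕ => (gi n m).2) := by
      funext k
      rw [ite_self, ← h4]
    rw [hVn]
    exact halive'.2.2.2.1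
  -- and the next move solves them
  have hQSolU : ∀ m, Q.Sol (ultraStr Mi U)
      {a | (ultraStr Mi U).add a (ultraStr Mi U).one ∈
        setU Mi U (fun n => (eZ m n).2)}
      (setU Mi U (fun n => if m + 1 ≤ n then fi n (m + 1) else Set.univ)) := by
    intro m
    show Formula.Sat _ _ _ _ _
    rw [hshiftU m]
    refine (sat2_ultra Mi U Ti hTne hQsa
      (fun n => {b | (Mi n).add b (Mi n).one ∈ (eZ m n).2})
      (fun n => if m + 1 ≤ n then fi n (m + 1) else Set.univ)).2
      (umem_mono (htail (m + 1)) fun n hn => ?_)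
    have halive' := (halive n).of_le hn
    have h3 := (heZ m n (Nat.le_of_succ_le hn)).2.2
    have h4 : (gi n m).2 = {b | (Mi n).add b (Mi n).one ∈ (eZ m n).2} :=
      congrArg Prod.snd h3
    have hVn : (fun k : ℕ => if k = 0 then {b | (Mi n).add b (Mi n).one ∈ (eZ m n).2}
        else (if m + 1 ≤ n then fi n (m + 1) else Set.univ)) =
        (fun k : ℕ => if k = 0 then (gi n m).2 else fi n (m + 1)) := by
      funext k
      rcases eq_or_ne k 0 with rfl | h0
      · rw [if_pos rfl, if_pos rfl, h4]
      · rw [if_neg h0, if_neg h0, if_pos hn]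
    rw [hVn]
    exact halive'.2.2.2.2.1
  -- the ultraproduct is a model of Γ
  have hModU : Models2 (ultraStr Mi U) (SU Mi U Ti) Γ :=
    models2_ultra Mi U Ti hTne hMT
  exact hull_contra hExt hθa hPa hQa hQsa hΛa hwin (ultraStr Mi U) (SU Mi U Ti) hModU
    (fun m => setU Mi U (fun n => if m ≤ n then fi n m else Set.univ))
    (fun m => umk Mi U (fun n => (eZ m n).1)) iU jU
    (fun m => setU Mi U (fun n => (eZ m n).2))
    hfSU hInstU hΛU (fun m => (hPhi m).1) (fun m => (hPhi m).2.1)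
    (fun m => (hPhi m).2.2) hflagU hQInstU hQSolU

end Merge
/-- Let `Γ` be a consistent extension of Δ⁰₁-comprehension that proves the existence of a
universal Σ⁰₁ formula `θ`. Let `P`, `Q` be Π¹₂-problems and `Λ(X,n,e)` an arithmetic
formula such that Player 2 wins any run of `Ĝ^Γ(Q → P)` that it plays according to `Λ`.
Then there is an `n` such that Player 2 wins any run of `G^Γ(Q → P)` that it plays
according to `Λ` in at most `n` many moves. -/
theorem statement7 (Γ : Set Formula) (hCons : SemConsistent Γ) (hExt : Delta01CA ⊆ Γ)
    (θ : Formula) (hθ : UnivSigma01 Γ θ)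
    (P Q : Pi12Problem) (hP : P.WellFormed) (hQ : Q.WellFormed)
    (Λ : Formula) (hΛ : Λ.IsArithmetic) (hΛN : Λ.numFV ⊆ {0, 1}) (hΛS : Λ.setFV ⊆ {0})
    (hwin : ∀ (M : L1Struc) (S : Set (Set M.carrier)), Countable M.carrier →
      Models2 M S Γ → D01Closed M S → ∀ f g,
        AccordsLambda θ Λ P Q M (CondS M S) f g → P2WinsRun P Q M (CondS M S) f g) :
    ∃ n : ℕ, ∀ M : L1Struc, Countable M.carrier → ∀ f g,
      AccordsLambda θ Λ P Q M (CondG Γ M) f g →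
        P2WinsRunWithin P Q M (CondG Γ M) f g n := by
  have hθa : θ.IsArithmetic := hθ.1.1.isArithmetic
  by_contra hno
  push_neg at hno
  refine merge_runs hExt hθa hP.1 hQ.1 hQ.2.1 hΛ hwin ?_
  intro n
  obtain ⟨M, hc, f, g, hacc, hnw⟩ := hno n
  refine ⟨M, f, g, hacc, ?_⟩
  by_contra halive
  exact hnw ⟨fun k hk => legal_of_accords hExt hwin M hc f g hacc k hk, halive⟩

end SOA
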